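/- arXiv:1708.01458 — 3 statements merged into one kernel-verified Lean document; each statement's English description precedes it below -/
import Mathlib

section
/- Let μ be a finite Radon measure on ℝⁿ, x ∈ ℝⁿ, m ≥ 0, and suppose the rescaled measures r⁻ᵐ μ_{x,r} (where μ_{x,r}(A) = μ(x + rA)) converge weakly-* in the space of Radon measures (tested against continuous compactly supported functions) to a Radon measure ν as r ↓ 0, and suppose there is a constant C with |μ|(B(x,lr)) ≤ C (lr)ᵐ for all l ∈ ℕ and small r. Then r⁻ᵐ μ_{x,r} → ν also in the space of tempered distributions, i.e. tested against all Schwartz functions. -/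
open MeasureTheory Filter Metric Topology
open scoped ENNReal


noncomputable def cutoffFn {E : Type*} [NormedAddCommGroup E] (R : ℝ) : E → ℝ :=
  fun y => max 0 (min 1 (R - ‖y‖))

lemma cutoffFn_continuous {E : Type*} [NormedAddCommGroup E] (R : ℝ) :
    Continuous (cutoffFn (E := E) R) :=
  continuous_const.max (continuous_const.min (continuous_const.sub continuous_norm))

lemma cutoffFn_nonneg {E : Type*} [NormedAddCommGroup E] (R : ℝ) (y : E) :
    0 ≤ cutoffFn R y := le_max_left _ _

lemma cutoffFn_le_one {E : Type*} [NormedAddCommGroup E] (R : ℝ) (y : E) :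
    cutoffFn R y ≤ 1 := max_le (by norm_num) (min_le_left _ _)

lemma cutoffFn_eq_one {E : Type*} [NormedAddCommGroup E] {R : ℝ} {y : E}
    (h : ‖y‖ ≤ R - 1) : cutoffFn R y = 1 := by
  have : min 1 (R - ‖y‖) = 1 := min_eq_left (by linarith)
  rw [cutoffFn, this]; exact max_eq_right zero_le_one

lemma cutoffFn_eq_zero {E : Type*} [NormedAddCommGroup E] {R : ℝ} {y : E}
    (h : R ≤ ‖y‖) : cutoffFn R y = 0 := by
  have : min 1 (R - ‖y‖) ≤ 0 := (min_le_right _ _).trans (by linarith)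
  exact max_eq_left this

lemma tail_bound {n : ℕ} (f : SchwartzMap (EuclideanSpace ℝ (Fin n)) ℝ)
    (m : ℝ) (hm : 0 ≤ m) (K C' : ℝ) (hK : 0 ≤ K) (hC' : 0 ≤ C')
    (hdecay : ∀ y, ‖y‖ ^ (⌈m⌉₊ + 2) * ‖f y‖ ≤ K)
    (σ : Measure (EuclideanSpace ℝ (Fin n)))
    (hσ : ∀ j : ℕ, σ (closedBall 0 (j:ℝ)) ≤ ENNReal.ofReal (C' * ((j:ℝ)+2)^m))
    (L : ℕ) (hL : 1 ≤ L) :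
    ∫⁻ y in (closedBall (0:EuclideanSpace ℝ (Fin n)) (L:ℝ))ᶜ, ENNReal.ofReal ‖f y‖ ∂σ
      ≤ ENNReal.ofReal (∑' l : ℕ, (K * C' * 4 ^ m) * (1 / (((l + L : ℕ)):ℝ)^2)) := by
  set k : ℕ := ⌈m⌉₊ + 2 with hk
  set D : ℝ := K * C' * 4 ^ m with hD
  have hD0 : 0 ≤ D := by positivity
  set g : ℕ → ℝ := fun j => D * (1 / (j:ℝ)^2) with hg
  have hgsum : Summable g := (Real.summable_one_div_nat_pow.2 one_lt_two).mul_left D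
  have hg0 : ∀ j, 0 ≤ g j := fun j => by positivity
  -- annuli
  set S : ℕ → Set (EuclideanSpace ℝ (Fin n)) :=
    fun l => closedBall 0 (((l + L : ℕ):ℝ) + 1) \ ball 0 ((l + L : ℕ):ℝ) with hS
  have hsub : (closedBall (0:EuclideanSpace ℝ (Fin n)) (L:ℝ))ᶜ ⊆ ⋃ l, S l := by
    intro y hy
    have hy' : (L:ℝ) < ‖y‖ := by
      simpa [mem_closedBall, dist_zero_right, not_le] using hy
    have h0 : (0:ℝ) ≤ ‖y‖ := norm_nonneg _
    set j : ℕ := ⌊‖y‖⌋₊ with hj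
    have hjL : L ≤ j := Nat.le_floor hy'.le
    refine Set.mem_iUnion.2 ⟨j - L, ?_⟩
    have hjeq : (j - L) + L = j := Nat.sub_add_cancel hjL
    constructor
    · simp only [mem_closedBall, dist_zero_right, hjeq]
      have := Nat.lt_floor_add_one ‖y‖
      linarith
    · simp only [mem_ball, dist_zero_right, not_lt, hjeq]
      exact Nat.floor_le h0
  calc ∫⁻ y in (closedBall (0:EuclideanSpace ℝ (Fin n)) (L:ℝ))ᶜ, ENNReal.ofReal ‖f y‖ ∂σ
      ≤ ∫⁻ y in ⋃ l, S l, ENNReal.ofReal ‖f y‖ ∂σ := lintegral_mono_set hsub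
    _ ≤ ∑' l, ∫⁻ y in S l, ENNReal.ofReal ‖f y‖ ∂σ := lintegral_iUnion_le _ _
    _ ≤ ∑' l, ENNReal.ofReal (g (l + L)) := by
        refine ENNReal.tsum_le_tsum fun l => ?_
        set j : ℕ := l + L with hj
        have hj1 : (1:ℝ) ≤ (j:ℝ) := by
          have : 1 ≤ j := le_trans hL (Nat.le_add_left _ _)
          exact_mod_cast this
        have hj0 : (0:ℝ) < (j:ℝ) := by linarith
        -- pointwise bound on S l
        have hpt : ∀ y ∈ S l, ENNReal.ofReal ‖f y‖ ≤ ENNReal.ofReal (K / (j:ℝ)^k) := by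
          intro y hy
          have hyn : (j:ℝ) ≤ ‖y‖ := by
            have h2 := hy.2
            simp only [mem_ball, dist_zero_right, not_lt] at h2
            rw [hj]; push_cast at h2 ⊢; linarith
          have hpow : (j:ℝ)^k ≤ ‖y‖^k := pow_le_pow_left₀ hj0.le hyn k
          have hfk : (j:ℝ)^k * ‖f y‖ ≤ K :=
            le_trans (mul_le_mul_of_nonneg_right hpow (norm_nonneg _)) (hdecay y)
          have : ‖f y‖ ≤ K / (j:ℝ)^k := by
            rw [le_div_iff₀ (by positivity)]
            linarith [hfk]
          exact ENNReal.ofReal_le_ofReal this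
        calc ∫⁻ y in S l, ENNReal.ofReal ‖f y‖ ∂σ
            ≤ ∫⁻ _ in S l, ENNReal.ofReal (K / (j:ℝ)^k) ∂σ :=
              setLIntegral_mono measurable_const hpt
          _ = ENNReal.ofReal (K / (j:ℝ)^k) * σ (S l) := setLIntegral_const _ _
          _ ≤ ENNReal.ofReal (K / (j:ℝ)^k) * ENNReal.ofReal (C' * (((j:ℝ)+1)+2)^m) := by
              have hmono : σ (S l) ≤ σ (closedBall 0 (((j+1:ℕ)):ℝ)) := by
                refine measure_mono (Set.diff_subset.trans ?_)
                simp only [hj]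
                push_cast
                exact subset_rfl
              have hball := hσ (j+1)
              have : σ (S l) ≤ ENNReal.ofReal (C' * (((j:ℝ)+1)+2)^m) := by
                refine hmono.trans (hball.trans (le_of_eq ?_))
                push_cast
                ring_nf
              exact mul_le_mul_right this _
          _ ≤ ENNReal.ofReal (g j) := by
              rw [← ENNReal.ofReal_mul (by positivity)]
              refine ENNReal.ofReal_le_ofReal ?_
              have h4j : ((j:ℝ)+1)+2 ≤ 4 * (j:ℝ) := by linarith
              have hrp : (((j:ℝ)+1)+2)^m ≤ (4:ℝ)^m * (j:ℝ)^m := by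
                calc (((j:ℝ)+1)+2)^m ≤ (4 * (j:ℝ))^m :=
                      Real.rpow_le_rpow (by linarith) h4j hm
                  _ = (4:ℝ)^m * (j:ℝ)^m := Real.mul_rpow (by norm_num) hj0.le
              have hstep1 : K / (j:ℝ)^k * (C' * (((j:ℝ)+1)+2)^m)
                  ≤ K / (j:ℝ)^k * (C' * ((4:ℝ)^m * (j:ℝ)^m)) := by
                refine mul_le_mul_of_nonneg_left ?_ (by positivity)
                exact mul_le_mul_of_nonneg_left hrp hC'
              have heq : K / (j:ℝ)^k * (C' * ((4:ℝ)^m * (j:ℝ)^m))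
                  = D * ((j:ℝ)^m / (j:ℝ)^k) := by rw [hD]; ring
              have hfrac : (j:ℝ)^m / (j:ℝ)^k ≤ 1 / (j:ℝ)^2 := by
                have h1 : (j:ℝ)^(k:ℕ) = (j:ℝ)^((k:ℕ):ℝ) := (Real.rpow_natCast _ _).symm
                have h2 : (j:ℝ)^m / (j:ℝ)^((k:ℕ):ℝ) = (j:ℝ)^(m - (k:ℕ)) :=
                  (Real.rpow_sub hj0 _ _).symm
                have hmk : m - ((k:ℕ):ℝ) ≤ -2 := by
                  have h3 : m ≤ (⌈m⌉₊ : ℝ) := Nat.le_ceil m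
                  have : ((k:ℕ):ℝ) = (⌈m⌉₊:ℝ) + 2 := by rw [hk]; push_cast; ring
                  rw [this]; linarith
                have h4 : (j:ℝ)^(m - (k:ℕ)) ≤ (j:ℝ)^(-2:ℝ) :=
                  Real.rpow_le_rpow_of_exponent_le hj1 hmk
                have h5 : (j:ℝ)^(-2:ℝ) = 1 / (j:ℝ)^2 := by
                  have hc : ((j:ℝ)^(2:ℕ) : ℝ) = (j:ℝ)^((2:ℕ):ℝ) := (Real.rpow_natCast _ _).symm
                  rw [show (-2:ℝ) = -((2:ℕ):ℝ) by norm_num, Real.rpow_neg hj0.le, one_div, hc]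
                rw [h1, h2, ← h5]
                exact h4
              calc K / (j:ℝ)^k * (C' * (((j:ℝ)+1)+2)^m)
                  ≤ D * ((j:ℝ)^m / (j:ℝ)^k) := by rw [← heq]; exact hstep1
                _ ≤ D * (1 / (j:ℝ)^2) := mul_le_mul_of_nonneg_left hfrac hD0
                _ = g j := rfl
    _ = ENNReal.ofReal (∑' l : ℕ, g (l + L)) := by
        rw [ENNReal.ofReal_tsum_of_nonneg (fun l => hg0 _) ((summable_nat_add_iff L).2 hgsum)]
    _ = ENNReal.ofReal (∑' l : ℕ, (K * C' * 4 ^ m) * (1 / (((l + L : ℕ)):ℝ)^2)) := rfl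


lemma diff_bound {n : ℕ} (f : SchwartzMap (EuclideanSpace ℝ (Fin n)) ℝ)
    (m : ℝ) (hm : 0 ≤ m) (K C' : ℝ) (hK : 0 ≤ K) (hC' : 0 ≤ C')
    (hdecay : ∀ y, ‖y‖ ^ (⌈m⌉₊ + 2) * ‖f y‖ ≤ K)
    (σ : Measure (EuclideanSpace ℝ (Fin n)))
    (hσ : ∀ j : ℕ, σ (closedBall 0 (j:ℝ)) ≤ ENNReal.ofReal (C' * ((j:ℝ)+2)^m))
    (L : ℕ) (hL : 1 ≤ L)
    (hintf : Integrable (fun y => f y) σ)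
    (hintχ : Integrable (fun y => f y * cutoffFn ((L:ℝ)+1) y) σ) :
    |(∫ y, f y ∂σ) - ∫ y, f y * cutoffFn ((L:ℝ)+1) y ∂σ|
      ≤ ∑' l : ℕ, (K * C' * 4 ^ m) * (1 / (((l + L : ℕ)):ℝ)^2) := by
  have hT0 : (0:ℝ) ≤ ∑' l : ℕ, (K * C' * 4 ^ m) * (1 / (((l + L : ℕ)):ℝ)^2) :=
    tsum_nonneg fun l => by positivity
  rw [← integral_sub hintf hintχ, ← Real.norm_eq_abs]
  refine le_trans (norm_integral_le_lintegral_norm _) ?_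
  refine ENNReal.toReal_le_of_le_ofReal hT0 ?_
  rw [← lintegral_add_compl (fun y => ENNReal.ofReal ‖f y - f y * cutoffFn ((L:ℝ)+1) y‖)
    (measurableSet_closedBall (x := (0:EuclideanSpace ℝ (Fin n))) (ε := (L:ℝ)))]
  have hzero : ∫⁻ y in closedBall (0:EuclideanSpace ℝ (Fin n)) (L:ℝ),
      ENNReal.ofReal ‖f y - f y * cutoffFn ((L:ℝ)+1) y‖ ∂σ = 0 := by
    refine le_antisymm (le_trans (setLIntegral_mono (g := fun _ => 0) measurable_const ?_)
      (by simp)) (zero_le)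
    intro y hy
    have hn : ‖y‖ ≤ (L:ℝ) := by simpa [mem_closedBall, dist_zero_right] using hy
    rw [cutoffFn_eq_one (by linarith)]
    simp
  rw [hzero, zero_add]
  have hmono2 : ∫⁻ y in (closedBall (0:EuclideanSpace ℝ (Fin n)) (L:ℝ))ᶜ,
      ENNReal.ofReal ‖f y - f y * cutoffFn ((L:ℝ)+1) y‖ ∂σ
      ≤ ∫⁻ y in (closedBall (0:EuclideanSpace ℝ (Fin n)) (L:ℝ))ᶜ, ENNReal.ofReal ‖f y‖ ∂σ := by
    refine setLIntegral_mono (ENNReal.measurable_ofReal.comp f.continuous.norm.measurable)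
      (fun y _ => ?_)
    refine ENNReal.ofReal_le_ofReal ?_
    have h0 := cutoffFn_nonneg ((L:ℝ)+1) y
    have h1 := cutoffFn_le_one ((L:ℝ)+1) y
    have heq : f y - f y * cutoffFn ((L:ℝ)+1) y = f y * (1 - cutoffFn ((L:ℝ)+1) y) := by ring
    rw [heq, norm_mul]
    have hle1 : ‖1 - cutoffFn ((L:ℝ)+1) y‖ ≤ 1 := by
      rw [Real.norm_eq_abs, abs_le]; constructor <;> linarith
    calc ‖f y‖ * ‖1 - cutoffFn ((L:ℝ)+1) y‖ ≤ ‖f y‖ * 1 :=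
          mul_le_mul_of_nonneg_left hle1 (norm_nonneg _)
      _ = ‖f y‖ := mul_one _
  exact hmono2.trans (tail_bound f m hm K C' hK hC' hdecay σ hσ L hL)



/-- Blow-up of a measure: `μ_{x,r}(A) = μ(x + r A)`, realized as the pushforward of `μ`
under `y ↦ r⁻¹ • (y - x)`. -/
noncomputable def blowUp {n : ℕ} (μ : Measure (EuclideanSpace ℝ (Fin n)))
    (x : EuclideanSpace ℝ (Fin n)) (r : ℝ) : Measure (EuclideanSpace ℝ (Fin n)) :=
  Measure.map (fun y => r⁻¹ • (y - x)) μ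

/-- If the normalized blow-ups `r⁻ᵐ μ_{x,r}` of a finite measure `μ` converge to `ν`
weak-* against continuous compactly supported functions, and `|μ|(B(x, l r)) ≤ C (l r)ᵐ`
for all `l ∈ ℕ` and small `r`, then the convergence also holds against all Schwartz
functions, i.e. in the space of tempered distributions. -/
theorem blowUp_tendsto_schwartz {n : ℕ} (μ ν : Measure (EuclideanSpace ℝ (Fin n)))
    [IsFiniteMeasure μ] [IsLocallyFiniteMeasure ν]
    (x : EuclideanSpace ℝ (Fin n)) (m : ℝ) (hm : 0 ≤ m)
    (hconv : ∀ f : C(EuclideanSpace ℝ (Fin n), ℝ), HasCompactSupport f →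
      Tendsto (fun r : ℝ => ∫ y, f y ∂(ENNReal.ofReal (r ^ (-m)) • blowUp μ x r))
        (𝓝[>] 0) (𝓝 (∫ y, f y ∂ν)))
    (hgrowth : ∃ C : ℝ, ∃ r₀ > (0:ℝ), ∀ l : ℕ, ∀ r ∈ Set.Ioo (0:ℝ) r₀,
      μ (closedBall x ((l : ℝ) * r)) ≤ ENNReal.ofReal (C * ((l : ℝ) * r) ^ m)) :
    ∀ f : SchwartzMap (EuclideanSpace ℝ (Fin n)) ℝ,
      Tendsto (fun r : ℝ => ∫ y, f y ∂(ENNReal.ofReal (r ^ (-m)) • blowUp μ x r))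
        (𝓝[>] 0) (𝓝 (∫ y, f y ∂ν)) := by
  intro f
  obtain ⟨C, r₀, hr₀, hgr⟩ := hgrowth
  set C' : ℝ := max C 0 with hC'def
  have hC'0 : (0:ℝ) ≤ C' := le_max_right _ _
  have hmeas : ∀ r : ℝ, Measurable (fun y : EuclideanSpace ℝ (Fin n) => r⁻¹ • (y - x)) :=
    fun r => ((continuous_id.sub continuous_const).const_smul r⁻¹).measurable
  set σ : ℝ → Measure (EuclideanSpace ℝ (Fin n)) := fun r => ENNReal.ofReal (r ^ (-m)) • blowUp μ x r with hσdef
  have hfin : ∀ r : ℝ, IsFiniteMeasure (σ r) := by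
    intro r
    constructor
    simp only [hσdef, Measure.smul_apply, smul_eq_mul]
    have hle : blowUp μ x r Set.univ ≤ μ Set.univ := by
      rw [blowUp, Measure.map_apply (hmeas r) MeasurableSet.univ]
      exact measure_mono (Set.subset_univ _)
    exact lt_of_le_of_lt (mul_le_mul_right hle _)
      (ENNReal.mul_lt_top ENNReal.ofReal_lt_top (measure_lt_top μ _))
  -- ball bound for the blow-up measures
  have hball : ∀ r ∈ Set.Ioo (0:ℝ) r₀, ∀ j : ℕ,
      σ r (closedBall 0 (j:ℝ)) ≤ ENNReal.ofReal (C * (j:ℝ)^m) := by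
    intro r hr j
    have hrpos : 0 < r := hr.1
    have hpre : (fun y : EuclideanSpace ℝ (Fin n) => r⁻¹ • (y - x)) ⁻¹' closedBall (0:EuclideanSpace ℝ (Fin n)) (j:ℝ)
        = closedBall x ((j:ℝ) * r) := by
      ext y
      simp only [Set.mem_preimage, mem_closedBall, dist_zero_right, sub_zero, norm_smul,
        norm_inv, Real.norm_eq_abs, abs_of_pos hrpos, dist_eq_norm]
      rw [inv_mul_le_iff₀ hrpos, mul_comm]
    have hrm : (0:ℝ) < r ^ m := Real.rpow_pos_of_pos hrpos m
    calc σ r (closedBall 0 (j:ℝ))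
        = ENNReal.ofReal (r ^ (-m)) * μ (closedBall x ((j:ℝ) * r)) := by
          simp only [hσdef, Measure.smul_apply, smul_eq_mul]
          rw [blowUp, Measure.map_apply (hmeas r) measurableSet_closedBall, hpre]
      _ ≤ ENNReal.ofReal (r ^ (-m)) * ENNReal.ofReal (C * ((j:ℝ) * r) ^ m) :=
          mul_le_mul_right (hgr j r hr) _
      _ = ENNReal.ofReal (C * (j:ℝ)^m) := by
          rw [← ENNReal.ofReal_mul (Real.rpow_nonneg hrpos.le _)]
          congr 1
          rw [Real.rpow_neg hrpos.le, Real.mul_rpow (Nat.cast_nonneg j) hrpos.le]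
          field_simp
  have hwk : ∀ a b : ℝ, 0 ≤ a → a ≤ b → C * a^m ≤ C' * b^m := by
    intro a b ha hab
    calc C * a^m ≤ C' * a^m :=
          mul_le_mul_of_nonneg_right (le_max_left _ _) (Real.rpow_nonneg ha m)
      _ ≤ C' * b^m := mul_le_mul_of_nonneg_left (Real.rpow_le_rpow ha hab hm) hC'0
  have hballσ : ∀ r ∈ Set.Ioo (0:ℝ) r₀, ∀ j : ℕ,
      σ r (closedBall 0 (j:ℝ)) ≤ ENNReal.ofReal (C' * ((j:ℝ)+2)^m) := by
    intro r hr j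
    exact (hball r hr j).trans (ENNReal.ofReal_le_ofReal
      (hwk _ _ (Nat.cast_nonneg j) (by linarith)))
  -- ball bound for ν via the weak-* convergence
  have hballν : ∀ j : ℕ, ν (closedBall (0:EuclideanSpace ℝ (Fin n)) (j:ℝ)) ≤ ENNReal.ofReal (C' * ((j:ℝ)+2)^m) := by
    intro j
    set χ : C(EuclideanSpace ℝ (Fin n), ℝ) := ⟨cutoffFn ((j:ℝ)+1), cutoffFn_continuous _⟩ with hχ
    have hχsupp : HasCompactSupport (χ : EuclideanSpace ℝ (Fin n) → ℝ) := by
      apply HasCompactSupport.intro (isCompact_closedBall (0:EuclideanSpace ℝ (Fin n)) ((j:ℝ)+1))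
      intro y hy
      have hn : (j:ℝ)+1 ≤ ‖y‖ :=
        le_of_lt (by simpa [mem_closedBall, dist_zero_right, not_le] using hy)
      simpa [hχ] using cutoffFn_eq_zero hn
    have hintν : Integrable (χ : EuclideanSpace ℝ (Fin n) → ℝ) ν := χ.continuous.integrable_of_hasCompactSupport hχsupp
    have h1 : ν (closedBall 0 (j:ℝ)) ≤ ENNReal.ofReal (∫ y, χ y ∂ν) := by
      rw [ofReal_integral_eq_lintegral_ofReal hintν
        (Filter.Eventually.of_forall (fun y => by simpa [hχ] using cutoffFn_nonneg ((j:ℝ)+1) y))]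
      calc ν (closedBall 0 (j:ℝ)) = ∫⁻ _ in closedBall (0:EuclideanSpace ℝ (Fin n)) (j:ℝ), 1 ∂ν :=
            (setLIntegral_one _).symm
        _ ≤ ∫⁻ y in closedBall (0:EuclideanSpace ℝ (Fin n)) (j:ℝ), ENNReal.ofReal (χ y) ∂ν := by
            refine setLIntegral_mono
              (ENNReal.measurable_ofReal.comp χ.continuous.measurable) (fun y hy => ?_)
            have hn : ‖y‖ ≤ (j:ℝ) := by simpa [mem_closedBall, dist_zero_right] using hy
            have h1' : cutoffFn ((j:ℝ)+1) y = 1 := cutoffFn_eq_one (by linarith)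
            have : χ y = 1 := by simp [hχ, h1']
            rw [this]; simp
        _ ≤ ∫⁻ y, ENNReal.ofReal (χ y) ∂ν := setLIntegral_le_lintegral _ _
    have h2 : ∫ y, χ y ∂ν ≤ C' * ((j:ℝ)+2)^m := by
      refine le_of_tendsto (hconv χ hχsupp) ?_
      filter_upwards [Ioo_mem_nhdsGT_of_mem (Set.left_mem_Ico.2 hr₀)] with r hr
      haveI := hfin r
      have heq0 : ∀ y ∉ closedBall (0:EuclideanSpace ℝ (Fin n)) ((j:ℝ)+1), χ y = 0 := by
        intro y hy
        have hn : (j:ℝ)+1 ≤ ‖y‖ :=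
          le_of_lt (by simpa [mem_closedBall, dist_zero_right, not_le] using hy)
        simpa [hχ] using cutoffFn_eq_zero hn
      have hintr : Integrable (χ : EuclideanSpace ℝ (Fin n) → ℝ) (σ r) :=
        χ.continuous.integrable_of_hasCompactSupport hχsupp
      have hle1 : ∫ y, χ y ∂(σ r) ≤ ((σ r) (closedBall 0 ((j:ℝ)+1))).toReal := by
        rw [← setIntegral_eq_integral_of_forall_compl_eq_zero heq0]
        calc ∫ y in closedBall (0:EuclideanSpace ℝ (Fin n)) ((j:ℝ)+1), χ y ∂(σ r)
            ≤ ∫ _ in closedBall (0:EuclideanSpace ℝ (Fin n)) ((j:ℝ)+1), (1:ℝ) ∂(σ r) := by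
              refine setIntegral_mono_on hintr.integrableOn
                (integrableOn_const (measure_lt_top _ _).ne)
                measurableSet_closedBall (fun y _ => ?_)
              simpa [hχ] using cutoffFn_le_one ((j:ℝ)+1) y
          _ = ((σ r) (closedBall 0 ((j:ℝ)+1))).toReal := by simp [setIntegral_const, Measure.real]
      have hcast : ((j:ℝ)+1) = ((j+1:ℕ):ℝ) := by push_cast; ring
      have hle2 := hball r hr (j+1)
      calc ∫ y, χ y ∂(σ r) ≤ ((σ r) (closedBall 0 ((j:ℝ)+1))).toReal := hle1
        _ ≤ (ENNReal.ofReal (C * (((j+1:ℕ)):ℝ)^m)).toReal := by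
            rw [hcast]
            exact ENNReal.toReal_mono ENNReal.ofReal_ne_top hle2
        _ ≤ C' * ((j:ℝ)+2)^m := by
            refine ENNReal.toReal_le_of_le_ofReal (by positivity)
              (ENNReal.ofReal_le_ofReal (hwk _ _ (by positivity) (by push_cast; linarith)))
    exact h1.trans (ENNReal.ofReal_le_ofReal h2)
  -- Schwartz decay
  obtain ⟨K, hKpos, hKdecay⟩ := f.decay (⌈m⌉₊ + 2) 0
  have hdecay : ∀ y, ‖y‖ ^ (⌈m⌉₊ + 2) * ‖f y‖ ≤ K := by
    intro y
    have := hKdecay y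
    rwa [norm_iteratedFDeriv_zero] at this
  obtain ⟨M, hMpos, hMdecay⟩ := f.decay 0 0
  have hM : ∀ y, ‖f y‖ ≤ M := by
    intro y
    have := hMdecay y
    rwa [norm_iteratedFDeriv_zero, pow_zero, one_mul] at this
  -- Integrability of f with respect to ν
  have hfν : Integrable (fun y => f y) ν := by
    refine ⟨f.continuous.aestronglyMeasurable, ?_⟩
    rw [hasFiniteIntegral_iff_norm]
    rw [← lintegral_add_compl (fun y => ENNReal.ofReal ‖f y‖)
      (measurableSet_closedBall (x := (0:EuclideanSpace ℝ (Fin n))) (ε := ((1:ℕ):ℝ)))]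
    have hp1 : ∫⁻ y in closedBall (0:EuclideanSpace ℝ (Fin n)) ((1:ℕ):ℝ), ENNReal.ofReal ‖f y‖ ∂ν
        ≤ ENNReal.ofReal M * ν (closedBall 0 ((1:ℕ):ℝ)) := by
      calc ∫⁻ y in closedBall (0:EuclideanSpace ℝ (Fin n)) ((1:ℕ):ℝ), ENNReal.ofReal ‖f y‖ ∂ν
          ≤ ∫⁻ _ in closedBall (0:EuclideanSpace ℝ (Fin n)) ((1:ℕ):ℝ), ENNReal.ofReal M ∂ν :=
            setLIntegral_mono measurable_const
              (fun y _ => ENNReal.ofReal_le_ofReal (hM y))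
        _ = ENNReal.ofReal M * ν (closedBall 0 ((1:ℕ):ℝ)) := setLIntegral_const _ _
    have hp2 := tail_bound f m hm K C' hKpos.le hC'0 hdecay ν hballν 1 le_rfl
    refine ENNReal.add_lt_top.2 ⟨lt_of_le_of_lt hp1 ?_, lt_of_le_of_lt hp2 ENNReal.ofReal_lt_top⟩
    exact ENNReal.mul_lt_top ENNReal.ofReal_lt_top (isCompact_closedBall _ _).measure_lt_top
  -- the tail sum
  set T : ℕ → ℝ := fun L => ∑' l : ℕ, (K * C' * 4 ^ m) * (1 / (((l + L : ℕ)):ℝ)^2) with hTdef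
  have hT0 : ∀ L, 0 ≤ T L := fun L => tsum_nonneg (fun l => by positivity)
  have hTtend : Tendsto T atTop (𝓝 0) :=
    tendsto_sum_nat_add (fun j : ℕ => (K * C' * 4 ^ m) * (1 / ((j:ℝ))^2))
  -- main estimate
  rw [Metric.tendsto_nhds]
  intro ε hε
  obtain ⟨L, hL1, hLT⟩ : ∃ L : ℕ, 1 ≤ L ∧ T L < ε/3 := by
    obtain ⟨L, h1, h2⟩ := ((hTtend.eventually
      (gt_mem_nhds (by linarith : (0:ℝ) < ε/3))).and (eventually_ge_atTop 1)).exists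
    exact ⟨L, h2, h1⟩
  set χf : C(EuclideanSpace ℝ (Fin n), ℝ) := ⟨fun y => f y * cutoffFn ((L:ℝ)+1) y,
    f.continuous.mul (cutoffFn_continuous _)⟩ with hχf
  have hχfsupp : HasCompactSupport (χf : EuclideanSpace ℝ (Fin n) → ℝ) := by
    apply HasCompactSupport.intro (isCompact_closedBall (0:EuclideanSpace ℝ (Fin n)) ((L:ℝ)+1))
    intro y hy
    have hn : (L:ℝ)+1 ≤ ‖y‖ :=
      le_of_lt (by simpa [mem_closedBall, dist_zero_right, not_le] using hy)
    simp [hχf, cutoffFn_eq_zero hn]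
  have hmid := hconv χf hχfsupp
  have hintχν : Integrable (fun y => f y * cutoffFn ((L:ℝ)+1) y) ν :=
    χf.continuous.integrable_of_hasCompactSupport hχfsupp
  have hb2 := diff_bound f m hm K C' hKpos.le hC'0 hdecay ν hballν L hL1 hfν hintχν
  filter_upwards [Metric.tendsto_nhds.1 hmid (ε/3) (by linarith),
    Ioo_mem_nhdsGT_of_mem (Set.left_mem_Ico.2 hr₀)] with r hmidr hr
  haveI := hfin r
  have hintf : Integrable (fun y => f y) (σ r) :=
    (integrable_const M).mono' f.continuous.aestronglyMeasurable
      (Filter.Eventually.of_forall hM)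
  have hintχr : Integrable (fun y => f y * cutoffFn ((L:ℝ)+1) y) (σ r) :=
    χf.continuous.integrable_of_hasCompactSupport hχfsupp
  have hb1 := diff_bound f m hm K C' hKpos.le hC'0 hdecay (σ r) (hballσ r hr) L hL1 hintf hintχr
  simp only [hχf, ContinuousMap.coe_mk] at hmidr
  rw [Real.dist_eq] at hmidr ⊢
  have htri : |(∫ y, f y ∂(σ r)) - ∫ y, f y ∂ν|
      ≤ |(∫ y, f y ∂(σ r)) - ∫ y, f y * cutoffFn ((L:ℝ)+1) y ∂(σ r)|
        + |(∫ y, f y * cutoffFn ((L:ℝ)+1) y ∂(σ r)) - ∫ y, f y * cutoffFn ((L:ℝ)+1) y ∂ν|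
        + |(∫ y, f y * cutoffFn ((L:ℝ)+1) y ∂ν) - ∫ y, f y ∂ν| := by
    calc |(∫ y, f y ∂(σ r)) - ∫ y, f y ∂ν|
        ≤ |(∫ y, f y ∂(σ r)) - ∫ y, f y * cutoffFn ((L:ℝ)+1) y ∂(σ r)|
          + |(∫ y, f y * cutoffFn ((L:ℝ)+1) y ∂(σ r)) - ∫ y, f y ∂ν| := abs_sub_le _ _ _
      _ ≤ _ := by
          have := abs_sub_le (∫ y, f y * cutoffFn ((L:ℝ)+1) y ∂(σ r))
            (∫ y, f y * cutoffFn ((L:ℝ)+1) y ∂ν) (∫ y, f y ∂ν)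
          linarith
  have hb2' : |(∫ y, f y * cutoffFn ((L:ℝ)+1) y ∂ν) - ∫ y, f y ∂ν| ≤ T L := by
    rw [abs_sub_comm]; exact hb2
  linarith [htri, hb1, hmidr, hb2', hLT]
end

section
/- Let F, G ⊂ ℝⁿ with F Borel and G compact. Then dim_H(F + G) ≤ dim_H(F) + dim_M(G), where dim_M denotes the upper Minkowski (box-counting) dimension. -/
open Filter Topology
open scoped ENNReal Pointwise
open MeasureTheory

/-- Covering number: the least cardinality of a finite set of centers of `δ`-balls
covering `G`. -/
noncomputable def covNum {X : Type*} [PseudoMetricSpace X] (G : Set X) (δ : ℝ) : ℕ∞ :=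
  sInf {N : ℕ∞ | ∃ s : Finset X, (s.card : ℕ∞) = N ∧ G ⊆ ⋃ x ∈ s, Metric.ball x δ}

/-- Upper Minkowski (box-counting) dimension of a set. -/
noncomputable def upperMinkDim {X : Type*} [PseudoMetricSpace X] (G : Set X) : ℝ :=
  limsup (fun δ : ℝ => Real.log ((covNum G δ).toNat) / Real.log (1 / δ)) (𝓝[>] 0)

lemma covNum_le_card {X : Type*} [PseudoMetricSpace X] {G : Set X} {δ : ℝ}
    (s : Finset X) (h : G ⊆ ⋃ x ∈ s, Metric.ball x δ) : covNum G δ ≤ s.card :=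
  sInf_le ⟨s, rfl, h⟩

lemma covNum_spec {X : Type*} [PseudoMetricSpace X] {G : Set X} (hG : IsCompact G) {δ : ℝ}
    (hδ : 0 < δ) : ∃ s : Finset X, G ⊆ (⋃ x ∈ s, Metric.ball x δ) ∧
      (s.card : ℕ∞) = covNum G δ := by
  have hne : {N : ℕ∞ | ∃ s : Finset X, (s.card : ℕ∞) = N ∧
      G ⊆ ⋃ x ∈ s, Metric.ball x δ}.Nonempty := by
    obtain ⟨t, ht⟩ := hG.elim_finite_subcover (fun x : X => Metric.ball x δ)
      (fun x => Metric.isOpen_ball)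
      (fun g hg => Set.mem_iUnion.2 ⟨g, Metric.mem_ball_self hδ⟩)
    exact ⟨t.card, t, rfl, ht⟩
  obtain ⟨s, hcard, hcov⟩ := csInf_mem hne
  exact ⟨s, hcov, hcard⟩

lemma covNum_ne_top {X : Type*} [PseudoMetricSpace X] {G : Set X} (hG : IsCompact G) {δ : ℝ}
    (hδ : 0 < δ) : covNum G δ ≠ ⊤ := by
  obtain ⟨s, _, hcard⟩ := covNum_spec hG hδ
  exact hcard ▸ (ENat.coe_ne_top _)

lemma coord_abs_le_norm {n : ℕ} (x : EuclideanSpace ℝ (Fin n)) (i : Fin n) : |x i| ≤ ‖x‖ := by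
  rw [EuclideanSpace.norm_eq, ← Real.sqrt_sq_eq_abs]
  apply Real.sqrt_le_sqrt
  have : |x i| ^ 2 ≤ ∑ j, ‖x j‖ ^ 2 := by
    have := Finset.single_le_sum (f := fun j => ‖x j‖ ^ 2)
      (fun j _ => sq_nonneg _) (Finset.mem_univ i)
    simpa [Real.norm_eq_abs, sq_abs] using this
  simpa [sq_abs] using this

lemma covNum_poly_bound {n : ℕ} {G : Set (EuclideanSpace ℝ (Fin n))} (hG : IsCompact G) :
    ∃ c : ℝ, 1 ≤ c ∧ ∀ δ : ℝ, 0 < δ → δ ≤ 1 → ((covNum G δ).toNat : ℝ) ≤ (c / δ) ^ n := by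
  classical
  obtain ⟨R₀, hR₀⟩ := hG.isBounded.subset_closedBall 0
  set R : ℝ := max R₀ 0 with hR
  have hRnn : 0 ≤ R := le_max_right _ _
  have hGR : G ⊆ Metric.closedBall 0 R :=
    hR₀.trans (Metric.closedBall_subset_closedBall (le_max_left _ _))
  have hc1 : (1:ℝ) ≤ 4 * R * (n + 1) + 5 := by
    have : (0:ℝ) ≤ 4 * R * (n + 1) := by positivity
    linarith
  refine ⟨4 * R * (n + 1) + 5, hc1, fun δ hδ hδ1 => ?_⟩
  set c : ℝ := 4 * R * (n + 1) + 5 with hc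
  set η : ℝ := δ / (2 * (n + 1)) with hη
  have hηpos : 0 < η := by positivity
  set K : ℤ := ⌈R / η⌉ + 1 with hK
  have hK0 : 0 ≤ K := by
    have : (0:ℝ) ≤ R / η := by positivity
    have := Int.ceil_nonneg this
    omega
  set ψ : EuclideanSpace ℝ (Fin n) → (Fin n → ℤ) := fun x i => ⌊x i / η⌋ with hψ
  -- same grid cell implies close
  have hclose : ∀ x y : EuclideanSpace ℝ (Fin n), ψ x = ψ y → dist x y < δ := by
    intro x y hxy
    have hcoord : ∀ i, dist (x i) (y i) ≤ η := by
      intro i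
      have h1 : ⌊x i / η⌋ = ⌊y i / η⌋ := congrFun hxy i
      have h2 : |x i / η - y i / η| < 1 := Int.abs_sub_lt_one_of_floor_eq_floor h1
      have : |x i - y i| < η := by
        rw [div_sub_div_same, abs_div, abs_of_pos hηpos, div_lt_one hηpos] at h2
        exact h2
      exact le_of_lt (by simpa [Real.dist_eq] using this)
    have : dist x y ≤ (n + 1) * η := by
      rw [EuclideanSpace.dist_eq]
      have hsum : ∑ i, dist (x i) (y i) ^ 2 ≤ (n : ℝ) * η ^ 2 := by
        calc ∑ i, dist (x i) (y i) ^ 2 ≤ ∑ _i : Fin n, η ^ 2 :=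
              Finset.sum_le_sum fun i _ => by
                have := hcoord i
                nlinarith [dist_nonneg (x := x i) (y := y i)]
          _ = (n : ℝ) * η ^ 2 := by simp [mul_comm]
      calc √(∑ i, dist (x i) (y i) ^ 2) ≤ √((n:ℝ) * η ^ 2) := Real.sqrt_le_sqrt hsum
        _ ≤ √(((n:ℝ) + 1) ^ 2 * η ^ 2) := by
            apply Real.sqrt_le_sqrt
            nlinarith [sq_nonneg η, Nat.cast_nonneg (α := ℝ) n,
              mul_nonneg (mul_nonneg (Nat.cast_nonneg (α := ℝ) n) (Nat.cast_nonneg (α := ℝ) n))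
                (sq_nonneg η), mul_nonneg (Nat.cast_nonneg (α := ℝ) n) (sq_nonneg η)]
        _ = (n + 1) * η := by
            rw [← mul_pow, Real.sqrt_sq (by positivity)]
    calc dist x y ≤ (n + 1) * η := this
      _ = δ / 2 := by rw [hη]; field_simp
      _ < δ := by linarith
  -- grid cells of points of G lie in a fixed finite cube
  have hmemT : ∀ x ∈ G, ∀ i, ψ x i ∈ Finset.Icc (-K) K := by
    intro x hx i
    have hxR : |x i| ≤ R := by
      have := coord_abs_le_norm x i
      have hn : ‖x‖ ≤ R := by simpa [Metric.mem_closedBall] using hGR hx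
      linarith
    obtain ⟨hlo, hhi⟩ := abs_le.mp hxR
    have h1 : x i / η ≤ R / η := by gcongr
    have h2 : -R / η ≤ x i / η := by gcongr
    refine Finset.mem_Icc.2 ⟨?_, ?_⟩
    · have : ⌊-R / η⌋ ≤ ψ x i := Int.floor_mono h2
      have h3 : ⌊-(R / η)⌋ = -⌈R / η⌉ := Int.floor_neg
      rw [neg_div] at this
      omega
    · have : ψ x i ≤ ⌊R / η⌋ := Int.floor_mono h1
      have := Int.floor_le_ceil (R / η)
      omega
  set T : Finset (Fin n → ℤ) := Fintype.piFinset (fun _ => Finset.Icc (-K) K) with hT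
  set ctr : (Fin n → ℤ) → EuclideanSpace ℝ (Fin n) := fun z =>
    if h : (G ∩ ψ ⁻¹' {z}).Nonempty then h.some else 0 with hctr
  have hcov : G ⊆ ⋃ x ∈ T.image ctr, Metric.ball x δ := by
    intro x hx
    have hzT : ψ x ∈ T := by
      rw [hT, Fintype.mem_piFinset]; exact hmemT x hx
    have hne : (G ∩ ψ ⁻¹' {ψ x}).Nonempty := ⟨x, hx, rfl⟩
    have hmem : ctr (ψ x) ∈ G ∩ ψ ⁻¹' {ψ x} := by
      rw [hctr]; simp only [dif_pos hne]; exact hne.some_mem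
    have heq : ψ (ctr (ψ x)) = ψ x := hmem.2
    refine Set.mem_biUnion (Finset.mem_coe.2 (Finset.mem_image.2 ⟨ψ x, hzT, rfl⟩)) ?_
    exact Metric.mem_ball.2 (by rw [dist_comm]; exact hclose _ _ heq)
  have h1 : covNum G δ ≤ ((T.image ctr).card : ℕ∞) := covNum_le_card _ hcov
  have h1' : ((covNum G δ).toNat : ℕ∞) ≤ ((T.image ctr).card : ℕ∞) := by
    rwa [ENat.coe_toNat (by exact ne_top_of_le_ne_top (ENat.coe_ne_top _) h1)]
  have h1'' : (covNum G δ).toNat ≤ (T.image ctr).card := by exact_mod_cast h1'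
  have h2 : (T.image ctr).card ≤ T.card := Finset.card_image_le
  have hTcard : T.card = (2 * K + 1).toNat ^ n := by
    rw [hT, Fintype.card_piFinset]
    simp [Int.card_Icc]
    congr 1
    omega
  have hKle : (K : ℝ) ≤ R / η + 2 := by
    have := Int.ceil_lt_add_one (R / η)
    rw [hK]
    push_cast
    linarith
  have hRη : R / η = 2 * R * (n + 1) / δ := by rw [hη]; field_simp
  have h5 : (5:ℝ) ≤ 5 / δ := by rw [le_div_iff₀ hδ]; nlinarith
  have h2K : 2 * (K:ℝ) + 1 ≤ c / δ := by
    have hd : 2 * (2 * R * (n + 1) / δ) = 4 * R * (n+1) / δ := by ring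
    have : 2 * (K:ℝ) + 1 ≤ 4 * R * (n+1) / δ + 5 := by
      rw [← hd]
      rw [hRη] at hKle
      linarith
    rw [hc, add_div]
    linarith
  calc ((covNum G δ).toNat : ℝ) ≤ (T.card : ℝ) := by exact_mod_cast h1''.trans h2
    _ = (2 * (K:ℝ) + 1) ^ n := by
        rw [hTcard]
        have : (((2 * K + 1).toNat : ℕ) : ℝ) = 2 * (K:ℝ) + 1 := by
          rw [← Int.cast_natCast, Int.toNat_of_nonneg (by omega)]; push_cast; ring
        rw [Nat.cast_pow, this]
    _ ≤ (c / δ) ^ n := pow_le_pow_left₀ (by positivity) h2K n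

lemma evBound {n : ℕ} {G : Set (EuclideanSpace ℝ (Fin n))} (hG : IsCompact G) :
    ∃ B : ℝ, ∀ᶠ δ in 𝓝[>] (0:ℝ),
      Real.log ((covNum G δ).toNat) / Real.log (1 / δ) ≤ B := by
  obtain ⟨c, hc1, hc⟩ := covNum_poly_bound hG
  refine ⟨2 * n, ?_⟩
  have hδ₁ : (0:ℝ) < min 1 (Real.exp (- max (Real.log c) 1)) := by positivity
  filter_upwards [Ioo_mem_nhdsGT_of_mem (Set.mem_Ico.2 ⟨le_refl 0, hδ₁⟩)] with δ hδ
  obtain ⟨h0, hlt⟩ := hδ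
  have hδ1 : δ ≤ 1 := le_of_lt (lt_of_lt_of_le hlt (min_le_left _ _))
  have hL : max (Real.log c) 1 ≤ Real.log (1/δ) := by
    have h2 : δ < Real.exp (-(max (Real.log c) 1)) := lt_of_lt_of_le hlt (min_le_right _ _)
    have h3 := Real.log_lt_log h0 h2
    rw [Real.log_exp] at h3
    rw [one_div, Real.log_inv]
    linarith
  have hL1 : (1:ℝ) ≤ Real.log (1/δ) := le_trans (le_max_right _ _) hL
  have hLc : Real.log c ≤ Real.log (1/δ) := le_trans (le_max_left _ _) hL
  have hLpos : (0:ℝ) < Real.log (1/δ) := by linarith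
  rw [div_le_iff₀ hLpos]
  rcases Nat.eq_zero_or_pos (covNum G δ).toNat with h | h
  · rw [h]
    simp only [Nat.cast_zero, Real.log_zero]
    positivity
  · have hN : (1:ℝ) ≤ ((covNum G δ).toNat : ℝ) := by exact_mod_cast h
    have hb := hc δ h0 hδ1
    have hlog : Real.log ((covNum G δ).toNat : ℝ) ≤ n * Real.log (c/δ) := by
      calc Real.log ((covNum G δ).toNat : ℝ) ≤ Real.log ((c/δ)^n) :=
            Real.log_le_log (by linarith) hb
        _ = n * Real.log (c/δ) := by rw [Real.log_pow]
    have hcd : Real.log (c/δ) = Real.log c + Real.log (1/δ) := by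
      rw [Real.log_div (by linarith) (ne_of_gt h0), one_div, Real.log_inv]
      ring
    have hnn : (0:ℝ) ≤ (n:ℝ) := Nat.cast_nonneg _
    nlinarith [mul_nonneg hnn (sub_nonneg.2 hLc)]

lemma ev_nonneg {X : Type*} [PseudoMetricSpace X] (G : Set X) :
    ∀ᶠ δ in 𝓝[>] (0:ℝ), 0 ≤ Real.log ((covNum G δ).toNat) / Real.log (1/δ) := by
  filter_upwards [Ioo_mem_nhdsGT_of_mem (Set.mem_Ico.2 ⟨le_refl (0:ℝ), one_pos⟩)] with δ hδ
  obtain ⟨h0, h1⟩ := hδ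
  apply div_nonneg (Real.log_natCast_nonneg _)
  rw [one_div, Real.log_inv]
  have := Real.log_nonpos (le_of_lt h0) (le_of_lt h1)
  linarith

lemma upperMinkDim_nonneg {X : Type*} [PseudoMetricSpace X] (G : Set X) :
    0 ≤ upperMinkDim G := by
  rw [upperMinkDim, Filter.limsup_eq]
  rcases Set.eq_empty_or_nonempty
      {a : ℝ | ∀ᶠ δ in 𝓝[>] (0:ℝ), Real.log ((covNum G δ).toNat) / Real.log (1/δ) ≤ a}
    with h | h
  · rw [h, Real.sInf_empty]
  · refine le_csInf h fun a ha => ?_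
    obtain ⟨δ, h0, hδa⟩ := ((ev_nonneg G).and ha).exists
    linarith

lemma ev_cov {n : ℕ} {G : Set (EuclideanSpace ℝ (Fin n))} (hG : IsCompact G) {t : ℝ}
    (ht : upperMinkDim G < t) :
    ∀ᶠ δ in 𝓝[>] (0:ℝ), ((covNum G δ).toNat : ℝ) ≤ δ ^ (-t) := by
  obtain ⟨B, hB⟩ := evBound hG
  rw [upperMinkDim, Filter.limsup_eq] at ht
  obtain ⟨a, ha, hat⟩ := exists_lt_of_csInf_lt ⟨B, hB⟩ ht
  filter_upwards [ha, Ioo_mem_nhdsGT_of_mem (Set.mem_Ico.2 ⟨le_refl (0:ℝ), one_pos⟩)]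
    with δ hδa hδ
  obtain ⟨h0, h1⟩ := hδ
  have hL : 0 < Real.log (1/δ) := by
    rw [one_div, Real.log_inv]
    have := Real.log_neg h0 h1
    linarith
  rcases eq_or_lt_of_le (show (0:ℝ) ≤ ((covNum G δ).toNat : ℝ) from Nat.cast_nonneg _)
    with h | h
  · rw [← h]; positivity
  · have hlog : Real.log ((covNum G δ).toNat : ℝ) < t * Real.log (1/δ) := by
      have h2 := (div_le_iff₀ hL).mp hδa
      nlinarith
    refine le_of_lt ?_
    rw [Real.lt_rpow_iff_log_lt h h0]
    rw [one_div, Real.log_inv] at hlog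
    linarith [hlog]

open MeasureTheory in
lemma key_measure {n : ℕ} (F G : Set (EuclideanSpace ℝ (Fin n))) (hG : IsCompact G)
    (s t : ℝ) (hs : 0 < s) (ht : 0 < t)
    (hF0 : μH[s] F = 0)
    (δ₀ : ℝ) (hδ₀ : 0 < δ₀)
    (hcovb : ∀ δ : ℝ, 0 < δ → δ < δ₀ → ((covNum G δ).toNat : ℝ) ≤ δ ^ (-t)) :
    μH[s + t] (F + G) = 0 := by
  classical
  rw [← nonpos_iff_eq_zero, MeasureTheory.Measure.hausdorffMeasure_apply]
  refine iSup₂_le fun r hr => ?_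
  refine ENNReal.le_of_forall_pos_le_add fun ε hε _ => ?_
  rw [zero_add]
  set A : ℝ≥0∞ := ENNReal.ofReal ((4:ℝ) ^ (s + t)) with hA
  have hA0 : A ≠ 0 := by
    rw [hA, ne_eq, ENNReal.ofReal_eq_zero, not_le]
    positivity
  have hAtop : A ≠ ∞ := ENNReal.ofReal_ne_top
  have h2A0 : (2 : ℝ≥0∞) * A ≠ 0 := by simp [hA0]
  have h2Atop : (2 : ℝ≥0∞) * A ≠ ∞ := ENNReal.mul_ne_top (by norm_num) hAtop
  set κ : ℝ≥0∞ := (ε : ℝ≥0∞) / (2 * A) with hκ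
  have hκ0 : κ ≠ 0 :=
    (ENNReal.div_pos (by exact_mod_cast hε.ne') h2Atop).ne'
  have hκtop : κ ≠ ∞ := (ENNReal.div_lt_top ENNReal.coe_ne_top h2A0).ne
  obtain ⟨Rr, hRr0, hRrle⟩ : ∃ Rr : ℝ, 0 < Rr ∧ ENNReal.ofReal Rr ≤ r := by
    rcases eq_or_ne r ∞ with h | h
    · exact ⟨1, one_pos, by simp [h]⟩
    · exact ⟨r.toReal, ENNReal.toReal_pos hr.ne' h, by rw [ENNReal.ofReal_toReal h]⟩
  set C : ℝ := κ.toReal with hC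
  have hC0 : 0 < C := ENNReal.toReal_pos hκ0 hκtop
  have hCκ : ENNReal.ofReal C ≤ κ := by rw [hC, ENNReal.ofReal_toReal hκtop]
  set ρ : ℝ := min (min (δ₀/2) (Rr/4)) (C ^ (1/s)) with hρ
  have hρ0 : 0 < ρ :=
    lt_min (lt_min (by linarith) (by linarith)) (Real.rpow_pos_of_pos hC0 _)
  have hρδ₀ : ρ < δ₀ :=
    lt_of_le_of_lt ((min_le_left _ _).trans (min_le_left _ _)) (by linarith)
  have hρr : ENNReal.ofReal (4 * ρ) ≤ r := by
    refine le_trans (ENNReal.ofReal_le_ofReal ?_) hRrle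
    have : ρ ≤ Rr / 4 := (min_le_left _ _).trans (min_le_right _ _)
    linarith
  have hρsC : ENNReal.ofReal (ρ ^ s) ≤ κ := by
    refine le_trans (ENNReal.ofReal_le_ofReal ?_) hCκ
    have h1 : ρ ≤ C ^ (1/s) := min_le_right _ _
    calc ρ ^ s ≤ (C ^ (1/s)) ^ s := Real.rpow_le_rpow (le_of_lt hρ0) h1 (le_of_lt hs)
      _ = C := by
          rw [← Real.rpow_mul (le_of_lt hC0), one_div, inv_mul_cancel₀ (ne_of_gt hs),
            Real.rpow_one]
  -- extract a good cover of F at scale ρ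
  have hF0' := hF0
  rw [MeasureTheory.Measure.hausdorffMeasure_apply] at hF0'
  have hinf : (⨅ (U : ℕ → Set (EuclideanSpace ℝ (Fin n))) (_ : F ⊆ ⋃ i, U i)
      (_ : ∀ i, EMetric.diam (U i) ≤ ENNReal.ofReal ρ),
      ∑' i, ⨆ _ : (U i).Nonempty, EMetric.diam (U i) ^ s) = 0 := by
    refine le_antisymm ?_ zero_le
    rw [← hF0']
    exact le_iSup₂ (f := fun (r' : ℝ≥0∞) (_ : 0 < r') =>
      ⨅ (U : ℕ → Set (EuclideanSpace ℝ (Fin n))) (_ : F ⊆ ⋃ i, U i) (_ : ∀ i, EMetric.diam (U i) ≤ r'),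
        ∑' i, ⨆ _ : (U i).Nonempty, EMetric.diam (U i) ^ s)
      (ENNReal.ofReal ρ) (ENNReal.ofReal_pos.2 hρ0)
  have hinflt : (⨅ (U : ℕ → Set (EuclideanSpace ℝ (Fin n))) (_ : F ⊆ ⋃ i, U i)
      (_ : ∀ i, EMetric.diam (U i) ≤ ENNReal.ofReal ρ),
      ∑' i, ⨆ _ : (U i).Nonempty, EMetric.diam (U i) ^ s) < κ := by
    rw [hinf]; exact pos_iff_ne_zero.2 hκ0
  obtain ⟨U, hU⟩ := iInf_lt_iff.mp hinflt
  obtain ⟨hUcov, hU⟩ := iInf_lt_iff.mp hU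
  obtain ⟨hUdiam, hUsum⟩ := iInf_lt_iff.mp hU
  set d : ℕ → ℝ≥0∞ := fun i => EMetric.diam (U i) with hd
  have hdtop : ∀ i, d i ≠ ∞ := fun i =>
    ne_top_of_le_ne_top ENNReal.ofReal_ne_top (hUdiam i)
  set δf : ℕ → ℝ := fun i => max ((d i).toReal) (ρ * 2 ^ (-((i:ℝ)+1)/s)) with hδf
  have hδfpos : ∀ i, 0 < δf i := fun i => lt_max_of_lt_right (by positivity)
  have hdρ : ∀ i, (d i).toReal ≤ ρ := fun i =>
    ENNReal.toReal_le_of_le_ofReal (le_of_lt hρ0) (hUdiam i)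
  have hδfρ : ∀ i, δf i ≤ ρ := by
    intro i
    apply max_le (hdρ i)
    have h2 : (2:ℝ) ^ (-((i:ℝ)+1)/s) ≤ 1 :=
      Real.rpow_le_one_of_one_le_of_nonpos one_le_two
        (by rw [neg_div]; exact neg_nonpos.2 (div_nonneg (by positivity) hs.le))
    nlinarith
  have hδfδ₀ : ∀ i, δf i < δ₀ := fun i => lt_of_le_of_lt (hδfρ i) hρδ₀
  -- choose covers of G at the scales δf i
  have hSex : ∀ i, ∃ S : Finset (EuclideanSpace ℝ (Fin n)), G ⊆ (⋃ x ∈ S, Metric.ball x (δf i)) ∧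
      (S.card : ℕ∞) = covNum G (δf i) := fun i => covNum_spec hG (hδfpos i)
  choose S hScov hScard using hSex
  have hScard' : ∀ i, (((S i).card : ℕ) : ℝ) ≤ (δf i) ^ (-t) := by
    intro i
    have h1 := hcovb (δf i) (hδfpos i) (hδfδ₀ i)
    have h2 : (covNum G (δf i)).toNat = (S i).card := by
      rw [← hScard i]; simp
    rwa [h2] at h1
  set xc : ℕ → EuclideanSpace ℝ (Fin n) := fun i => if h : (U i).Nonempty then h.some else 0 with hxc
  set V : ℕ × ℕ → Set (EuclideanSpace ℝ (Fin n)) := fun p =>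
    if (U p.1).Nonempty ∧ p.2 < (S p.1).card
    then Metric.ball (xc p.1 + ((S p.1).toList.getD p.2 0)) (2 * δf p.1) else ∅ with hV
  set e : ℕ ≃ ℕ × ℕ := (Denumerable.eqv (ℕ × ℕ)).symm with he
  have hdiamV : ∀ p : ℕ × ℕ, EMetric.diam (V p) ≤ ENNReal.ofReal (4 * δf p.1) := by
    intro p
    simp only [hV]
    split_ifs with h
    · calc EMetric.diam (Metric.ball _ (2 * δf p.1))
          ≤ 2 * ENNReal.ofReal (2 * δf p.1) := by
            rw [← Metric.emetric_ball]; exact EMetric.diam_ball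
        _ = ENNReal.ofReal (4 * δf p.1) := by
            rw [← ENNReal.ofReal_ofNat 2, ← ENNReal.ofReal_mul (by norm_num)]
            norm_num
            ring_nf
    · simp [EMetric.diam]
  have hcov' : F + G ⊆ ⋃ k, V (e k) := by
    rw [e.surjective.iUnion_comp V]
    rintro z hz
    obtain ⟨a, ha, b, hb, rfl⟩ := Set.mem_add.mp hz
    obtain ⟨i, hai⟩ := Set.mem_iUnion.mp (hUcov ha)
    have hUne : (U i).Nonempty := ⟨a, hai⟩
    obtain ⟨y, hyS, hby⟩ := Set.mem_iUnion₂.mp (hScov i hb)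
    obtain ⟨j, hj, hy⟩ := List.mem_iff_getElem.mp ((Finset.mem_toList.2 hyS))
    have hjcard : j < (S i).card := by rwa [Finset.length_toList] at hj
    refine Set.mem_iUnion.2 ⟨(i, j), ?_⟩
    rw [hV]
    simp only [if_pos (show (U i).Nonempty ∧ j < (S i).card from ⟨hUne, hjcard⟩)]
    have hgetD : (S i).toList.getD j 0 = y := by
      rw [List.getD_eq_getElem _ _ hj, hy]
    rw [hgetD]
    have hxmem : xc i ∈ U i := by
      rw [hxc]; simp only [dif_pos hUne]; exact hUne.some_mem
    have hdax : dist a (xc i) ≤ δf i := by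
      have h1 := EMetric.edist_le_diam_of_mem hai hxmem
      have h2 : dist a (xc i) ≤ (d i).toReal := by
        rw [dist_edist]
        exact ENNReal.toReal_mono (hdtop i) h1
      exact h2.trans (le_max_left _ _)
    have hdby : dist b y < δf i := Metric.mem_ball.mp hby
    rw [Metric.mem_ball]
    calc dist (a + b) (xc i + y) ≤ dist a (xc i) + dist b y := dist_add_add_le _ _ _ _
      _ < δf i + δf i := by linarith
      _ = 2 * δf i := by ring
  have hdiam' : ∀ k, EMetric.diam (V (e k)) ≤ r := fun k =>
    (hdiamV (e k)).trans (le_trans (ENNReal.ofReal_le_ofReal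
      (by have := hδfρ (e k).1; linarith)) hρr)
  refine le_trans (iInf_le_of_le (fun k => V (e k))
    (iInf_le_of_le hcov' (iInf_le_of_le hdiam' le_rfl))) ?_
  -- now bound the sum
  have hetsum : (∑' k, ⨆ _ : (V (e k)).Nonempty, EMetric.diam (V (e k)) ^ (s + t))
      = ∑' p, ⨆ _ : (V p).Nonempty, EMetric.diam (V p) ^ (s + t) :=
    e.tsum_eq (fun p => ⨆ _ : (V p).Nonempty, EMetric.diam (V p) ^ (s + t))
  erw [hetsum, ENNReal.tsum_prod']
  have hinner : ∀ i, (∑' j, ⨆ _ : (V (i, j)).Nonempty, EMetric.diam (V (i, j)) ^ (s + t))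
      ≤ ((S i).card : ℝ≥0∞) * ENNReal.ofReal (4 * δf i) ^ (s + t) := by
    intro i
    have hle : ∀ j, (⨆ _ : (V (i, j)).Nonempty, EMetric.diam (V (i, j)) ^ (s + t))
        ≤ if j ∈ Finset.range (S i).card
          then ENNReal.ofReal (4 * δf i) ^ (s + t) else 0 := by
      intro j
      by_cases hj : (U i).Nonempty ∧ j < (S i).card
      · rw [if_pos (Finset.mem_range.2 hj.2)]
        exact iSup_le fun _ => ENNReal.rpow_le_rpow (hdiamV (i, j)) (by linarith)
      · have hVe : V (i, j) = ∅ := by rw [hV]; exact if_neg hj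
        rw [hVe]
        simp
    calc (∑' j, ⨆ _ : (V (i, j)).Nonempty, EMetric.diam (V (i, j)) ^ (s + t))
        ≤ ∑' j, (if j ∈ Finset.range (S i).card
            then ENNReal.ofReal (4 * δf i) ^ (s + t) else 0) := ENNReal.tsum_le_tsum hle
      _ = ∑ j ∈ Finset.range (S i).card, ENNReal.ofReal (4 * δf i) ^ (s + t) := by
          rw [tsum_eq_sum (s := Finset.range (S i).card) (fun j hj => if_neg hj)]
          exact Finset.sum_congr rfl fun j hj => if_pos hj
      _ = ((S i).card : ℝ≥0∞) * ENNReal.ofReal (4 * δf i) ^ (s + t) := by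
          rw [Finset.sum_const, Finset.card_range, nsmul_eq_mul]
  have hBi : ∀ i, ((S i).card : ℝ≥0∞) * ENNReal.ofReal (4 * δf i) ^ (s + t)
      ≤ A * (ENNReal.ofReal ((d i).toReal ^ s)
          + ENNReal.ofReal (ρ ^ s * 2 ^ (-((i:ℝ)+1)))) := by
    intro i
    have h4 : ENNReal.ofReal (4 * δf i) ^ (s + t) = ENNReal.ofReal ((4 * δf i) ^ (s + t)) :=
      ENNReal.ofReal_rpow_of_pos (by have := hδfpos i; linarith)
    have hcard : ((S i).card : ℝ≥0∞) ≤ ENNReal.ofReal ((δf i) ^ (-t)) := by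
      rw [← ENNReal.ofReal_natCast]
      exact ENNReal.ofReal_le_ofReal (hScard' i)
    have hmax : (δf i) ^ s ≤ (d i).toReal ^ s + ρ ^ s * 2 ^ (-((i:ℝ)+1)) := by
      have hsplit : (ρ * 2 ^ (-((i:ℝ)+1)/s)) ^ s = ρ ^ s * 2 ^ (-((i:ℝ)+1)) := by
        rw [Real.mul_rpow (le_of_lt hρ0) (Real.rpow_nonneg (by norm_num) _),
          ← Real.rpow_mul (by norm_num : (0:ℝ) ≤ 2),
          div_mul_cancel₀ _ (ne_of_gt hs)]
      rcases max_choice ((d i).toReal) (ρ * 2 ^ (-((i:ℝ)+1)/s)) with h | h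
      · have : δf i = (d i).toReal := h
        rw [this]
        have : (0:ℝ) ≤ ρ ^ s * 2 ^ (-((i:ℝ)+1)) := by positivity
        linarith
      · have heq : δf i = ρ * 2 ^ (-((i:ℝ)+1)/s) := h
        rw [heq, hsplit]
        have : (0:ℝ) ≤ (d i).toReal ^ s := Real.rpow_nonneg ENNReal.toReal_nonneg _
        linarith
    calc ((S i).card : ℝ≥0∞) * ENNReal.ofReal (4 * δf i) ^ (s + t)
        ≤ ENNReal.ofReal ((δf i) ^ (-t)) * ENNReal.ofReal ((4 * δf i) ^ (s + t)) := by
          rw [h4]; exact mul_le_mul_left hcard _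
      _ = ENNReal.ofReal ((δf i) ^ (-t) * (4 * δf i) ^ (s + t)) :=
          (ENNReal.ofReal_mul (Real.rpow_nonneg (le_of_lt (hδfpos i)) _)).symm
      _ = ENNReal.ofReal ((4:ℝ) ^ (s + t) * (δf i) ^ s) := by
          congr 1
          rw [Real.mul_rpow (by norm_num) (le_of_lt (hδfpos i))]
          have h5 : (δf i) ^ (-t) * ((4:ℝ) ^ (s+t) * (δf i) ^ (s+t))
              = (4:ℝ) ^ (s+t) * ((δf i) ^ (-t) * (δf i) ^ (s+t)) := by ring
          rw [h5, ← Real.rpow_add (hδfpos i), show -t + (s + t) = s by ring]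
      _ ≤ A * (ENNReal.ofReal ((d i).toReal ^ s)
          + ENNReal.ofReal (ρ ^ s * 2 ^ (-((i:ℝ)+1)))) := by
          rw [ENNReal.ofReal_mul (by positivity), ← hA]
          refine mul_le_mul_right ?_ A
          refine le_trans (ENNReal.ofReal_le_ofReal hmax) ?_
          rw [ENNReal.ofReal_add (Real.rpow_nonneg ENNReal.toReal_nonneg _) (by positivity)]
  have hsum1 : (∑' i, ENNReal.ofReal ((d i).toReal ^ s)) ≤ κ := by
    refine le_trans (ENNReal.tsum_le_tsum (fun i => ?_)) hUsum.le
    by_cases hUe : (U i).Nonempty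
    · have h1 : ENNReal.ofReal ((d i).toReal ^ s) = (d i) ^ s := by
        rw [ENNReal.toReal_rpow, ENNReal.ofReal_toReal
          (ENNReal.rpow_ne_top_of_nonneg (le_of_lt hs) (hdtop i))]
      rw [h1]
      exact le_iSup_of_le hUe le_rfl
    · have h1 : (d i).toReal = 0 := by
        rw [hd]
        simp [EMetric.diam, Set.not_nonempty_iff_eq_empty.mp hUe]
      rw [h1, Real.zero_rpow (ne_of_gt hs)]
      simp
  have hsum2 : (∑' i : ℕ, ENNReal.ofReal (ρ ^ s * 2 ^ (-((i:ℝ)+1)))) ≤ κ := by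
    have hterm : ∀ i : ℕ, ρ ^ s * (2:ℝ) ^ (-((i:ℝ)+1)) = ρ ^ s * (1/2) ^ (i+1) := by
      intro i
      congr 1
      rw [show (-((i:ℝ)+1)) = -(((i+1 : ℕ) : ℝ)) by push_cast; ring,
        Real.rpow_neg (by norm_num), Real.rpow_natCast, one_div, inv_pow]
    have hsummable : Summable (fun i : ℕ => ρ ^ s * (1/2:ℝ) ^ (i+1)) := by
      have h1 : Summable (fun i : ℕ => (1/2:ℝ) ^ (i+1)) := by
        simp only [pow_succ]
        exact summable_geometric_two.mul_right _
      exact h1.mul_left _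
    have htsum : (∑' i : ℕ, ρ ^ s * (1/2:ℝ) ^ (i+1)) = ρ ^ s := by
      rw [tsum_mul_left]
      have h2 : (∑' i : ℕ, (1/2:ℝ) ^ (i+1)) = 1 := by
        simp only [pow_succ]
        rw [tsum_mul_right, tsum_geometric_two]
        norm_num
      rw [h2, mul_one]
    calc (∑' i : ℕ, ENNReal.ofReal (ρ ^ s * 2 ^ (-((i:ℝ)+1))))
        = ∑' i : ℕ, ENNReal.ofReal (ρ ^ s * (1/2:ℝ) ^ (i+1)) :=
          tsum_congr fun i => by rw [hterm i]
      _ = ENNReal.ofReal (∑' i : ℕ, ρ ^ s * (1/2:ℝ) ^ (i+1)) :=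
          (ENNReal.ofReal_tsum_of_nonneg (fun i => by positivity) hsummable).symm
      _ = ENNReal.ofReal (ρ ^ s) := by rw [htsum]
      _ ≤ κ := hρsC
  calc (∑' i, ∑' j, ⨆ _ : (V (i,j)).Nonempty, EMetric.diam (V (i,j)) ^ (s+t))
      ≤ ∑' i : ℕ, A * (ENNReal.ofReal ((d i).toReal ^ s)
          + ENNReal.ofReal (ρ ^ s * 2 ^ (-((i:ℝ)+1)))) :=
        ENNReal.tsum_le_tsum fun i => (hinner i).trans (hBi i)
    _ = A * ((∑' i : ℕ, ENNReal.ofReal ((d i).toReal ^ s))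
          + ∑' i : ℕ, ENNReal.ofReal (ρ ^ s * 2 ^ (-((i:ℝ)+1)))) := by
        rw [ENNReal.tsum_mul_left, ENNReal.tsum_add]
    _ ≤ A * (κ + κ) := mul_le_mul_right (add_le_add hsum1 hsum2) A
    _ = ε := by
        rw [hκ, show κ + κ = 2 * κ from (two_mul κ).symm, ← mul_assoc, mul_comm A 2]
        exact ENNReal.mul_div_cancel h2A0 h2Atop

/-- For `F` Borel and `G` compact in `ℝⁿ`, the Hausdorff dimension of the Minkowski sum
`F + G` is at most `dim_H F + dim_M G`, where `dim_M` is the upper Minkowski dimension. -/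
theorem dimH_add_le {n : ℕ} (F G : Set (EuclideanSpace ℝ (Fin n)))
    (hF : MeasurableSet F) (hG : IsCompact G) :
    dimH (F + G) ≤ dimH F + ENNReal.ofReal (upperMinkDim G) := by
  rcases Set.eq_empty_or_nonempty G with hGe | hGne
  · rw [hGe, Set.add_empty, dimH_empty]
    exact zero_le
  have ht0 : 0 ≤ upperMinkDim G := upperMinkDim_nonneg G
  suffices H : ∀ t : ℝ, 0 < t → upperMinkDim G < t →
      dimH (F + G) ≤ dimH F + ENNReal.ofReal t by
    refine ENNReal.le_of_forall_pos_le_add fun ε hε hlt => ?_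
    have hεpos : (0:ℝ) < ε := hε
    have h1 := H (upperMinkDim G + ε) (by linarith) (lt_add_of_pos_right _ hεpos)
    refine h1.trans ?_
    calc dimH F + ENNReal.ofReal (upperMinkDim G + ε)
        ≤ dimH F + (ENNReal.ofReal (upperMinkDim G) + ENNReal.ofReal ε) :=
          add_le_add_right ENNReal.ofReal_add_le _
      _ = dimH F + ENNReal.ofReal (upperMinkDim G) + ε := by
          rw [add_assoc, ENNReal.ofReal_coe_nnreal]
  intro t htpos ht
  have hev := ev_cov hG ht
  rw [eventually_nhdsWithin_iff, Metric.eventually_nhds_iff] at hev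
  obtain ⟨δ₀, hδ₀, hδ₀p⟩ := hev
  refine dimH_le fun d' hd' => ?_
  by_contra hcon
  push_neg at hcon
  have hsub : dimH F < (d' : ℝ≥0∞) - ENNReal.ofReal t :=
    lt_tsub_iff_right.mpr hcon
  obtain ⟨s', hs'1, hs'2⟩ := ENNReal.lt_iff_exists_nnreal_btwn.1 hsub
  have hsum_lt : (s' : ℝ≥0∞) + ENNReal.ofReal t < (d' : ℝ≥0∞) :=
    lt_tsub_iff_right.mp hs'2
  have hs'pos : 0 < (s' : ℝ) := by
    have : (0 : ℝ≥0∞) < (s' : ℝ≥0∞) := lt_of_le_of_lt zero_le hs'1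
    exact_mod_cast this
  have hst_real : (s' : ℝ) + t < (d' : ℝ) := by
    have h2 : ENNReal.ofReal ((s' : ℝ) + t) < ENNReal.ofReal (d' : ℝ) := by
      rw [ENNReal.ofReal_add (by positivity) (le_of_lt htpos),
        ENNReal.ofReal_coe_nnreal, ENNReal.ofReal_coe_nnreal]
      exact hsum_lt
    exact (ENNReal.ofReal_lt_ofReal_iff_of_nonneg (by positivity)).1 h2
  have hμ : μH[(s' : ℝ) + t] (F + G) = 0 := by
    refine key_measure F G hG s' t hs'pos htpos
      (hausdorffMeasure_of_dimH_lt hs'1) δ₀ hδ₀ (fun δ h0 hlt => ?_)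
    exact hδ₀p (by simpa [Real.dist_eq, abs_of_pos h0] using hlt) (Set.mem_Ioi.2 h0)
  rcases MeasureTheory.Measure.hausdorffMeasure_zero_or_top hst_real (F + G) with h | h
  · rw [hd'] at h
    exact ENNReal.top_ne_zero h
  · rw [hμ] at h
    exact ENNReal.zero_ne_top h
end

section
/- Let V_j ⊂ ℝⁿ be a 2-dimensional subspace and, in coordinates ξ = (ξ₁, ξ₂) ∈ V_j × V_j^⊥, let Ω = {(ξ₁, ξ₂) : |ξ₁| ≥ 1, |ξ₂| ≤ log(1 + |ξ₁|)}. Let h : ℝⁿ → ℂ be a measurable function satisfying |h(ξ)| ≤ C · dist(ξ, V_j)/|ξ| for all ξ ∈ Ω (with |ξ| ≥ 1 there). Then for every s > 0, ∫_Ω |h(ξ)|² |ξ|^{−2s} dξ < ∞; i.e. the inverse Fourier transform of h·1_Ω belongs to the Sobolev space H^{−s} for every s > 0. -/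
open MeasureTheory Metric
open scoped ENNReal RealInnerProductSpace

noncomputable def sqnorm {k : ℕ} (x : Fin k → ℝ) : ℝ := Real.sqrt (∑ i, x i ^ 2)

lemma sqnorm_nonneg {k : ℕ} (x : Fin k → ℝ) : 0 ≤ sqnorm x := Real.sqrt_nonneg _

lemma sqnorm_meas {k : ℕ} : Measurable (sqnorm (k := k)) := by
  apply Measurable.comp Real.continuous_sqrt.measurable
  exact Finset.measurable_sum _ fun i _ => (measurable_pi_apply i).pow_const 2

lemma sqnorm_eq_norm {k : ℕ} (x : EuclideanSpace ℝ (Fin k)) : sqnorm (fun i => x i) = ‖x‖ := by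
  rw [EuclideanSpace.norm_eq, sqnorm]
  congr 1
  refine Finset.sum_congr rfl fun i _ => ?_
  rw [Real.norm_eq_abs, sq_abs]

-- final 2D integral

lemma aux_2d {t : ℝ} (ht : 2 < t) :
    ∫⁻ x : Fin 2 → ℝ, ENNReal.ofReal ((1 + sqnorm x) ^ (-t)) < ⊤ := by
  have hint : Integrable (fun z : EuclideanSpace ℝ (Fin 2) => (1 + ‖z‖) ^ (-t)) := by
    apply integrable_one_add_norm (E := EuclideanSpace ℝ (Fin 2))
    simpa [finrank_euclideanSpace_fin] using ht
  have h1 : ∫⁻ x : Fin 2 → ℝ, ENNReal.ofReal ((1 + sqnorm x) ^ (-t))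
      = ∫⁻ z : EuclideanSpace ℝ (Fin 2), ENNReal.ofReal ((1 + ‖z‖) ^ (-t)) := by
    rw [← (EuclideanSpace.volume_preserving_symm_measurableEquiv_toLp (Fin 2)).lintegral_comp_emb
      (MeasurableEquiv.toLp 2 (Fin 2 → ℝ)).symm.measurableEmbedding]
    refine lintegral_congr fun z => ?_
    congr 2
    rw [← sqnorm_eq_norm z]
    rfl
  rw [h1]
  exact hint.lintegral_lt_top

lemma aux_slab {m : ℕ} {L : ℝ} (hL : 0 ≤ L) :
    volume {y : Fin m → ℝ | sqnorm y ≤ L} ≤ ENNReal.ofReal (2 * L) ^ m := by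
  have hsub : {y : Fin m → ℝ | sqnorm y ≤ L} ⊆ Set.pi Set.univ (fun _ => Set.Icc (-L) L) := by
    intro y hy
    intro i _
    simp only [Set.mem_Icc]
    have h1 : y i ^ 2 ≤ L ^ 2 := by
      have h2 : y i ^ 2 ≤ ∑ j, y j ^ 2 :=
        Finset.single_le_sum (f := fun j => y j ^ 2) (fun j _ => sq_nonneg _) (Finset.mem_univ i)
      have h3 : ∑ j, y j ^ 2 ≤ L ^ 2 := by
        have := hy
        simp only [Set.mem_setOf_eq, sqnorm] at this
        have h4 : (0:ℝ) ≤ ∑ j, y j ^ 2 := Finset.sum_nonneg fun j _ => sq_nonneg _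
        nlinarith [Real.sq_sqrt h4, Real.sqrt_nonneg (∑ j, y j ^ 2)]
      linarith
    constructor <;> nlinarith
  calc volume {y : Fin m → ℝ | sqnorm y ≤ L} ≤ volume (Set.pi Set.univ (fun _ : Fin m => Set.Icc (-L) L)) :=
        measure_mono hsub
    _ = ∏ _i : Fin m, volume (Set.Icc (-L) L) := volume_pi_pi _
    _ = ENNReal.ofReal (2 * L) ^ m := by
        simp [Real.volume_Icc]
        congr 1
        congr 1
        ring
        rw [ENNReal.ofReal_mul' (by norm_num), ENNReal.ofReal_ofNat]

lemma aux_scalar (m : ℕ) {s : ℝ} (hs : 0 < s) {D : ℝ} (hD : 0 ≤ D) :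
    ∃ K : ℝ, 0 ≤ K ∧ ∀ a : ℝ, 1 ≤ a →
      D * Real.log (1 + a) ^ 2 * a ^ (-(2 + 2 * s)) * (2 * Real.log (1 + a)) ^ m
        ≤ K * (1 + a) ^ (-(2 + s)) := by
  set ε : ℝ := s / (m + 2) with hε
  have hεpos : 0 < ε := by positivity
  set K₁ : ℝ := 2 ^ ε / ε with hK₁
  have hK₁pos : 0 < K₁ := by positivity
  refine ⟨D * 2 ^ m * K₁ ^ (m + 2) * 2 ^ (2 + s), by positivity, fun a ha => ?_⟩
  have ha0 : (0:ℝ) < a := by linarith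
  have hL0 : 0 ≤ Real.log (1 + a) := Real.log_nonneg (by linarith)
  have hlog : Real.log (1 + a) ≤ K₁ * a ^ ε := by
    have h1 : Real.log (1 + a) ≤ (1 + a) ^ ε / ε := Real.log_le_rpow_div (by linarith) hεpos
    have h2 : (1 + a) ^ ε ≤ (2 * a) ^ ε := Real.rpow_le_rpow (by linarith) (by linarith) hεpos.le
    have h3 : (2 * a) ^ ε = 2 ^ ε * a ^ ε := Real.mul_rpow (by norm_num) ha0.le
    calc Real.log (1 + a) ≤ (1 + a) ^ ε / ε := h1
      _ ≤ (2 * a) ^ ε / ε := by gcongr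
      _ = K₁ * a ^ ε := by rw [h3, hK₁]; ring
  have hLHS : D * Real.log (1 + a) ^ 2 * a ^ (-(2 + 2 * s)) * (2 * Real.log (1 + a)) ^ m
      = D * 2 ^ m * Real.log (1 + a) ^ (m + 2) * a ^ (-(2 + 2 * s)) := by
    rw [mul_pow, pow_add]
    ring
  rw [hLHS]
  have hlogpow : Real.log (1 + a) ^ (m + 2) ≤ K₁ ^ (m + 2) * a ^ s := by
    calc Real.log (1 + a) ^ (m + 2) ≤ (K₁ * a ^ ε) ^ (m + 2) := pow_le_pow_left₀ hL0 hlog _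
      _ = K₁ ^ (m + 2) * (a ^ ε) ^ (m + 2) := mul_pow _ _ _
      _ = K₁ ^ (m + 2) * a ^ s := by
          congr 1
          rw [← Real.rpow_natCast (a ^ ε) (m + 2), ← Real.rpow_mul ha0.le]
          congr 1
          field_simp [hε]
          rw [hε]; push_cast; field_simp
  have hcomb : a ^ s * a ^ (-(2 + 2 * s)) = a ^ (-(2 + s)) := by
    rw [← Real.rpow_add ha0]
    ring_nf
  have hfin : a ^ (-(2 + s)) ≤ 2 ^ (2 + s) * (1 + a) ^ (-(2 + s)) := by
    have h1 : (2 * a) ^ (-(2 + s)) ≤ (1 + a) ^ (-(2 + s)) :=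
      Real.rpow_le_rpow_of_nonpos (by linarith) (by linarith) (by linarith)
    have h2 : (2 * a) ^ (-(2 + s)) = 2 ^ (-(2 + s)) * a ^ (-(2 + s)) :=
      Real.mul_rpow (by norm_num) ha0.le
    have h3 : (0:ℝ) < 2 ^ (2 + s) := Real.rpow_pos_of_pos (by norm_num) _
    have h4 : (2:ℝ) ^ (-(2 + s)) * 2 ^ (2 + s) = 1 := by
      rw [← Real.rpow_add (by norm_num : (0:ℝ) < 2), neg_add_cancel, Real.rpow_zero]
    nlinarith [Real.rpow_pos_of_pos ha0 (-(2 + s))]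
  calc D * 2 ^ m * Real.log (1 + a) ^ (m + 2) * a ^ (-(2 + 2 * s))
      ≤ D * 2 ^ m * (K₁ ^ (m + 2) * a ^ s) * a ^ (-(2 + 2 * s)) := by
        have hrp : (0:ℝ) ≤ a ^ (-(2 + 2 * s)) := (Real.rpow_pos_of_pos ha0 _).le
        have h2m : (0:ℝ) ≤ D * 2 ^ m := by positivity
        nlinarith [mul_le_mul_of_nonneg_left hlogpow h2m]
    _ = D * 2 ^ m * K₁ ^ (m + 2) * (a ^ s * a ^ (-(2 + 2 * s))) := by ring
    _ = D * 2 ^ m * K₁ ^ (m + 2) * a ^ (-(2 + s)) := by rw [hcomb]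
    _ ≤ D * 2 ^ m * K₁ ^ (m + 2) * (2 ^ (2 + s) * (1 + a) ^ (-(2 + s))) := by
        have : (0:ℝ) ≤ D * 2 ^ m * K₁ ^ (m + 2) := by positivity
        exact mul_le_mul_of_nonneg_left hfin this
    _ = D * 2 ^ m * K₁ ^ (m + 2) * 2 ^ (2 + s) * (1 + a) ^ (-(2 + s)) := by ring

lemma aux_prod (m : ℕ) {s : ℝ} (hs : 0 < s) {D : ℝ} (hD : 0 ≤ D) :
    ∫⁻ p : (Fin 2 → ℝ) × (Fin m → ℝ),
      (if 1 ≤ sqnorm p.1 ∧ sqnorm p.2 ≤ Real.log (1 + sqnorm p.1)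
       then ENNReal.ofReal (D * Real.log (1 + sqnorm p.1) ^ 2 * sqnorm p.1 ^ (-(2 + 2 * s)))
       else 0) < ⊤ := by
  obtain ⟨K, hK0, hK⟩ := aux_scalar m hs hD
  -- measurability of the integrand
  have hmeas1 : Measurable fun p : (Fin 2 → ℝ) × (Fin m → ℝ) => sqnorm p.1 :=
    sqnorm_meas.comp measurable_fst
  have hmeas2 : Measurable fun p : (Fin 2 → ℝ) × (Fin m → ℝ) => sqnorm p.2 :=
    sqnorm_meas.comp measurable_snd
  have hS : MeasurableSet {p : (Fin 2 → ℝ) × (Fin m → ℝ) |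
      1 ≤ sqnorm p.1 ∧ sqnorm p.2 ≤ Real.log (1 + sqnorm p.1)} := by
    refine (measurableSet_le measurable_const hmeas1).inter
      (measurableSet_le hmeas2 (Real.measurable_log.comp (measurable_const.add hmeas1)))
  have hval : Measurable fun p : (Fin 2 → ℝ) × (Fin m → ℝ) =>
      ENNReal.ofReal (D * Real.log (1 + sqnorm p.1) ^ 2 * sqnorm p.1 ^ (-(2 + 2 * s))) := by
    apply Measurable.ennreal_ofReal
    exact ((measurable_const.mul ((Real.measurable_log.comp
      (measurable_const.add hmeas1)).pow_const 2)).mul (hmeas1.pow_const _))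
  have hf : Measurable fun p : (Fin 2 → ℝ) × (Fin m → ℝ) =>
      (if 1 ≤ sqnorm p.1 ∧ sqnorm p.2 ≤ Real.log (1 + sqnorm p.1)
       then ENNReal.ofReal (D * Real.log (1 + sqnorm p.1) ^ 2 * sqnorm p.1 ^ (-(2 + 2 * s)))
       else 0) := Measurable.ite hS hval measurable_const
  rw [MeasureTheory.Measure.volume_eq_prod, lintegral_prod _ hf.aemeasurable]
  -- bound the inner integral
  have hinner : ∀ x : Fin 2 → ℝ,
      (∫⁻ y : Fin m → ℝ, (if 1 ≤ sqnorm x ∧ sqnorm y ≤ Real.log (1 + sqnorm x)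
         then ENNReal.ofReal (D * Real.log (1 + sqnorm x) ^ 2 * sqnorm x ^ (-(2 + 2 * s)))
         else 0))
      ≤ ENNReal.ofReal (K * (1 + sqnorm x) ^ (-(2 + s))) := by
    intro x
    by_cases hx : 1 ≤ sqnorm x
    · set a := sqnorm x with ha
      set L := Real.log (1 + a) with hLdef
      have hL0 : 0 ≤ L := Real.log_nonneg (by linarith)
      set c := ENNReal.ofReal (D * L ^ 2 * a ^ (-(2 + 2 * s))) with hc
      have heq : (fun y : Fin m → ℝ => (if 1 ≤ a ∧ sqnorm y ≤ L then c else 0))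
          = {y : Fin m → ℝ | sqnorm y ≤ L}.indicator (fun _ => c) := by
        funext y
        by_cases hy : sqnorm y ≤ L <;> simp [hx, hy, Set.indicator]
      calc ∫⁻ y : Fin m → ℝ, (if 1 ≤ a ∧ sqnorm y ≤ L then c else 0)
          = ∫⁻ y in {y : Fin m → ℝ | sqnorm y ≤ L}, c := by
            rw [heq, lintegral_indicator]
            exact measurableSet_le sqnorm_meas measurable_const
        _ = c * volume {y : Fin m → ℝ | sqnorm y ≤ L} := by
            rw [setLIntegral_const]
        _ ≤ c * ENNReal.ofReal (2 * L) ^ m := by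
            exact mul_le_mul_right (aux_slab hL0) c
        _ = ENNReal.ofReal (D * L ^ 2 * a ^ (-(2 + 2 * s)) * (2 * L) ^ m) := by
            rw [hc, ← ENNReal.ofReal_pow (by linarith), ← ENNReal.ofReal_mul']
            exact pow_nonneg (by linarith) m
        _ ≤ ENNReal.ofReal (K * (1 + a) ^ (-(2 + s))) := by
            exact ENNReal.ofReal_le_ofReal (hK a hx)
    · have : ∀ y : Fin m → ℝ, (if 1 ≤ sqnorm x ∧ sqnorm y ≤ Real.log (1 + sqnorm x)
         then ENNReal.ofReal (D * Real.log (1 + sqnorm x) ^ 2 * sqnorm x ^ (-(2 + 2 * s)))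
         else 0) = 0 := by
        intro y
        simp [hx]
      simp only [this, lintegral_zero]
      exact zero_le
  calc ∫⁻ x : Fin 2 → ℝ, ∫⁻ y : Fin m → ℝ, (if 1 ≤ sqnorm x ∧ sqnorm y ≤ Real.log (1 + sqnorm x)
         then ENNReal.ofReal (D * Real.log (1 + sqnorm x) ^ 2 * sqnorm x ^ (-(2 + 2 * s)))
         else 0)
      ≤ ∫⁻ x : Fin 2 → ℝ, ENNReal.ofReal (K * (1 + sqnorm x) ^ (-(2 + s))) :=
        lintegral_mono hinner
    _ ≤ ∫⁻ x : Fin 2 → ℝ, ENNReal.ofReal K * ENNReal.ofReal ((1 + sqnorm x) ^ (-(2 + s))) := by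
        refine lintegral_mono fun x => ?_
        rw [← ENNReal.ofReal_mul hK0]
    _ = ENNReal.ofReal K * ∫⁻ x : Fin 2 → ℝ, ENNReal.ofReal ((1 + sqnorm x) ^ (-(2 + s))) :=
        lintegral_const_mul' _ _ ENNReal.ofReal_ne_top
    _ < ⊤ := by
        refine ENNReal.mul_lt_top ENNReal.ofReal_lt_top ?_
        exact aux_2d (by linarith)

lemma aux_split {n : ℕ} (V : Submodule ℝ (EuclideanSpace ℝ (Fin n)))
    (hV : Module.finrank ℝ V = 2) :
    ∃ F : EuclideanSpace ℝ (Fin n) ≃ᵐ (Fin 2 → ℝ) × (Fin (n - 2) → ℝ),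
      MeasurePreserving F volume volume ∧
      ∀ ξ : EuclideanSpace ℝ (Fin n),
        sqnorm (F ξ).1 = ‖((Submodule.orthogonalProjectionOnto V) ξ : EuclideanSpace ℝ (Fin n))‖ ∧
        sqnorm (F ξ).2 = ‖ξ - ((Submodule.orthogonalProjectionOnto V) ξ : EuclideanSpace ℝ (Fin n))‖ := by
  have hn2 : 2 ≤ n := by
    have h1 := V.finrank_le
    rw [hV, finrank_euclideanSpace_fin] at h1
    exact h1
  have hVc : Module.finrank ℝ (Vᗮ) = n - 2 := by
    have h1 := V.finrank_add_finrank_orthogonal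
    rw [hV, finrank_euclideanSpace_fin] at h1
    omega
  set m := n - 2 with hm
  let b₁ : OrthonormalBasis (Fin 2) ℝ V := (stdOrthonormalBasis ℝ V).reindex (finCongr hV)
  let b₂ : OrthonormalBasis (Fin m) ℝ (Vᗮ) := (stdOrthonormalBasis ℝ (Vᗮ)).reindex (finCongr hVc)
  set v : Fin 2 ⊕ Fin m → EuclideanSpace ℝ (Fin n) :=
    Sum.elim (fun i => (b₁ i : EuclideanSpace ℝ (Fin n)))
      (fun j => (b₂ j : EuclideanSpace ℝ (Fin n))) with hvdef
  have hv : Orthonormal ℝ v := by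
    rw [orthonormal_iff_ite]
    rintro (i | i) (j | j)
    · have := orthonormal_iff_ite.mp b₁.orthonormal i j
      simpa [hvdef, Submodule.coe_inner] using this
    · simpa [hvdef] using Submodule.inner_right_of_mem_orthogonal (b₁ i).2 (b₂ j).2
    · simpa [hvdef] using Submodule.inner_left_of_mem_orthogonal (b₁ j).2 (b₂ i).2
    · have := orthonormal_iff_ite.mp b₂.orthonormal i j
      simpa [hvdef, Submodule.coe_inner] using this
  have hcard : Fintype.card (Fin 2 ⊕ Fin m) = Module.finrank ℝ (EuclideanSpace ℝ (Fin n)) := by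
    simp [finrank_euclideanSpace_fin]
    omega
  let Bb : Module.Basis (Fin 2 ⊕ Fin m) ℝ (EuclideanSpace ℝ (Fin n)) :=
    basisOfLinearIndependentOfCardEqFinrank hv.linearIndependent hcard
  have hBb : ⇑Bb = v := coe_basisOfLinearIndependentOfCardEqFinrank _ _
  let B : OrthonormalBasis (Fin 2 ⊕ Fin m) ℝ (EuclideanSpace ℝ (Fin n)) :=
    Bb.toOrthonormalBasis (by rwa [hBb])
  have hB : ⇑B = v := by rw [Module.Basis.coe_toOrthonormalBasis, hBb]
  refine ⟨B.measurableEquiv.trans ((MeasurableEquiv.toLp 2 _).symm.trans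
    (MeasurableEquiv.sumPiEquivProdPi (fun _ : Fin 2 ⊕ Fin m => ℝ))), ?_, ?_⟩
  · exact ((volume_measurePreserving_sumPiEquivProdPi_symm
        (fun _ : Fin 2 ⊕ Fin m => ℝ)).symm _).comp
      (((EuclideanSpace.volume_preserving_symm_measurableEquiv_toLp _)).comp
        B.measurePreserving_measurableEquiv)
  · intro ξ
    set x : EuclideanSpace ℝ (Fin 2 ⊕ Fin m) := B.repr ξ with hx
    set ξ₁ : EuclideanSpace ℝ (Fin n) := ∑ i : Fin 2, x (Sum.inl i) • B (Sum.inl i) with hξ₁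
    set ξ₂ : EuclideanSpace ℝ (Fin n) := ∑ j : Fin m, x (Sum.inr j) • B (Sum.inr j) with hξ₂
    have hsum : ξ₁ + ξ₂ = ξ := by
      have h1 := B.sum_repr ξ
      rwa [Fintype.sum_sum_type] at h1
    have hmem1 : ξ₁ ∈ V := by
      refine Submodule.sum_mem _ fun i _ => Submodule.smul_mem _ _ ?_
      rw [hB]
      exact (b₁ i).2
    have hmem2 : ξ₂ ∈ Vᗮ := by
      refine Submodule.sum_mem _ fun j _ => Submodule.smul_mem _ _ ?_
      rw [hB]
      exact (b₂ j).2
    have hproj : ((Submodule.orthogonalProjectionOnto V) ξ : EuclideanSpace ℝ (Fin n)) = ξ₁ := by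
      rw [← hsum, map_add]
      have h1 : Submodule.orthogonalProjectionOnto V ξ₁ = ⟨ξ₁, hmem1⟩ :=
        Submodule.orthogonalProjectionOnto_mem_subspace_eq_self (⟨ξ₁, hmem1⟩ : V)
      have h2 : Submodule.orthogonalProjectionOnto V ξ₂ = 0 :=
        Submodule.orthogonalProjectionOnto_apply_of_mem_orthogonal hmem2
      rw [h1, h2, add_zero]
    have hperp : ξ - ((Submodule.orthogonalProjectionOnto V) ξ : EuclideanSpace ℝ (Fin n)) = ξ₂ := by
      rw [hproj, ← hsum]
      abel
    -- norms via orthonormality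
    have hv1 : Orthonormal ℝ (fun i : Fin 2 => B (Sum.inl i)) :=
      B.orthonormal.comp Sum.inl Sum.inl_injective
    have hv2 : Orthonormal ℝ (fun j : Fin m => B (Sum.inr j)) :=
      B.orthonormal.comp Sum.inr Sum.inr_injective
    have hnorm1 : ‖ξ₁‖ = Real.sqrt (∑ i : Fin 2, x (Sum.inl i) ^ 2) := by
      have h1 := hv1.inner_sum (fun i => x (Sum.inl i)) (fun i => x (Sum.inl i)) Finset.univ
      simp only [starRingEnd_apply, star_trivial] at h1
      have h2 : ⟪ξ₁, ξ₁⟫ = ∑ i : Fin 2, x (Sum.inl i) * x (Sum.inl i) := h1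
      rw [← Real.sqrt_sq (norm_nonneg ξ₁), ← real_inner_self_eq_norm_sq, h2]
      congr 1
      exact Finset.sum_congr rfl fun i _ => (sq _).symm
    have hnorm2 : ‖ξ₂‖ = Real.sqrt (∑ j : Fin m, x (Sum.inr j) ^ 2) := by
      have h1 := hv2.inner_sum (fun j => x (Sum.inr j)) (fun j => x (Sum.inr j)) Finset.univ
      simp only [starRingEnd_apply, star_trivial] at h1
      have h2 : ⟪ξ₂, ξ₂⟫ = ∑ j : Fin m, x (Sum.inr j) * x (Sum.inr j) := h1
      rw [← Real.sqrt_sq (norm_nonneg ξ₂), ← real_inner_self_eq_norm_sq, h2]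
      congr 1
      exact Finset.sum_congr rfl fun j _ => (sq _).symm
    constructor
    · rw [hproj, hnorm1]
      rfl
    · rw [hperp, hnorm2]
      rfl

/-- Let `V` be a 2-dimensional subspace of `ℝⁿ` and, in the coordinates
`ξ = (ξ₁, ξ₂) ∈ V × V^⊥`, let `Ω = {|ξ₁| ≥ 1, |ξ₂| ≤ log(1+|ξ₁|)}`. If `h` is measurable
with `|h(ξ)| ≤ C · dist(ξ, V)/|ξ|` on `Ω`, then `∫_Ω |h|² |ξ|^{-2s} dξ < ∞` for every
`s > 0`, i.e. the inverse Fourier transform of `h·1_Ω` lies in `H^{-s}` for all `s > 0`. -/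
theorem log_region_sobolev {n : ℕ}
    (V : Submodule ℝ (EuclideanSpace ℝ (Fin n))) (hV : Module.finrank ℝ V = 2)
    (h : EuclideanSpace ℝ (Fin n) → ℂ) (hmeas : Measurable h) (C : ℝ)
    (Ω : Set (EuclideanSpace ℝ (Fin n)))
    (hΩ : Ω = {ξ : EuclideanSpace ℝ (Fin n) |
      1 ≤ ‖((Submodule.orthogonalProjectionOnto V) ξ : EuclideanSpace ℝ (Fin n))‖ ∧
      ‖ξ - ((Submodule.orthogonalProjectionOnto V) ξ : EuclideanSpace ℝ (Fin n))‖ ≤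
        Real.log (1 + ‖((Submodule.orthogonalProjectionOnto V) ξ : EuclideanSpace ℝ (Fin n))‖)})
    (hbound : ∀ ξ ∈ Ω, ‖h ξ‖ ≤ C * infDist ξ (V : Set (EuclideanSpace ℝ (Fin n))) / ‖ξ‖) :
    ∀ s : ℝ, 0 < s →
      ∫⁻ ξ in Ω, ENNReal.ofReal (‖h ξ‖ ^ 2 * ‖ξ‖ ^ (-(2 * s))) ∂volume < ⊤ := by
  intro s hs
  obtain ⟨F, hFmp, hFnorm⟩ := aux_split V hV
  set D : ℝ := (max C 0) ^ 2 with hDdef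
  have hD : 0 ≤ D := sq_nonneg _
  set G : (Fin 2 → ℝ) × (Fin (n - 2) → ℝ) → ℝ≥0∞ := fun p =>
    (if 1 ≤ sqnorm p.1 ∧ sqnorm p.2 ≤ Real.log (1 + sqnorm p.1)
     then ENNReal.ofReal (D * Real.log (1 + sqnorm p.1) ^ 2 * sqnorm p.1 ^ (-(2 + 2 * s)))
     else 0) with hGdef
  -- measurability of G
  have hmeas1 : Measurable fun p : (Fin 2 → ℝ) × (Fin (n - 2) → ℝ) => sqnorm p.1 :=
    sqnorm_meas.comp measurable_fst
  have hmeas2 : Measurable fun p : (Fin 2 → ℝ) × (Fin (n - 2) → ℝ) => sqnorm p.2 :=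
    sqnorm_meas.comp measurable_snd
  have hGmeas : Measurable G := by
    refine Measurable.ite ?_ ?_ measurable_const
    · exact (measurableSet_le measurable_const hmeas1).inter
        (measurableSet_le hmeas2 (Real.measurable_log.comp (measurable_const.add hmeas1)))
    · exact Measurable.ennreal_ofReal (((measurable_const.mul ((Real.measurable_log.comp
        (measurable_const.add hmeas1)).pow_const 2)).mul (hmeas1.pow_const _)))
  -- pointwise bound on Ω
  have hpt : ∀ ξ ∈ Ω, ENNReal.ofReal (‖h ξ‖ ^ 2 * ‖ξ‖ ^ (-(2 * s))) ≤ G (F ξ) := by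
    intro ξ hξ
    obtain ⟨ha1, ha2⟩ : 1 ≤ ‖((Submodule.orthogonalProjectionOnto V) ξ : EuclideanSpace ℝ (Fin n))‖ ∧
        ‖ξ - ((Submodule.orthogonalProjectionOnto V) ξ : EuclideanSpace ℝ (Fin n))‖ ≤
          Real.log (1 + ‖((Submodule.orthogonalProjectionOnto V) ξ : EuclideanSpace ℝ (Fin n))‖) := by
      rw [hΩ] at hξ
      exact hξ
    obtain ⟨hF1, hF2⟩ := hFnorm ξ
    set a : ℝ := ‖((Submodule.orthogonalProjectionOnto V) ξ : EuclideanSpace ℝ (Fin n))‖ with hadef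
    set L : ℝ := Real.log (1 + a) with hLdef
    have hcond : 1 ≤ sqnorm (F ξ).1 ∧ sqnorm (F ξ).2 ≤ Real.log (1 + sqnorm (F ξ).1) := by
      rw [hF1, hF2]
      exact ⟨ha1, ha2⟩
    have hGeq : G (F ξ) = ENNReal.ofReal (D * Real.log (1 + a) ^ 2 * a ^ (-(2 + 2 * s))) := by
      rw [hGdef]
      simp only
      rw [if_pos hcond, hF1]
    rw [hGeq]
    apply ENNReal.ofReal_le_ofReal
    -- the real inequality
    set N : ℝ := ‖ξ‖ with hNdef
    set d : ℝ := infDist ξ (V : Set (EuclideanSpace ℝ (Fin n))) with hddef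
    have hd0 : 0 ≤ d := infDist_nonneg
    have haN : a ≤ N := by
      calc a ≤ ‖Submodule.orthogonalProjectionOnto V‖ * ‖ξ‖ := (Submodule.orthogonalProjectionOnto V).le_opNorm ξ
        _ ≤ 1 * ‖ξ‖ := by
            have := Submodule.orthogonalProjectionOnto_norm_le V
            exact mul_le_mul_of_nonneg_right this (norm_nonneg ξ)
        _ = N := one_mul _
    have hN1 : (1:ℝ) ≤ N := le_trans ha1 haN
    have hN0 : (0:ℝ) < N := by linarith
    have ha0 : (0:ℝ) < a := by linarith
    have hdL : d ≤ L := by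
      refine le_trans ?_ ha2
      have hPmem : ((Submodule.orthogonalProjectionOnto V) ξ : EuclideanSpace ℝ (Fin n)) ∈
          (V : Set (EuclideanSpace ℝ (Fin n))) := ((Submodule.orthogonalProjectionOnto V) ξ).2
      rw [hddef, ← dist_eq_norm]
      exact infDist_le_dist_of_mem hPmem
    have hL0 : 0 ≤ L := le_trans hd0 hdL
    have hC' : ‖h ξ‖ ≤ max C 0 * d / N := by
      refine le_trans (hbound ξ hξ) ?_
      have hdN : 0 ≤ d / N := div_nonneg hd0 hN0.le
      calc C * d / N = C * (d / N) := by ring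
        _ ≤ max C 0 * (d / N) := mul_le_mul_of_nonneg_right (le_max_left _ _) hdN
        _ = max C 0 * d / N := by ring
    have hsq : ‖h ξ‖ ^ 2 ≤ (max C 0) ^ 2 * d ^ 2 / N ^ 2 := by
      have h1 : ‖h ξ‖ ^ 2 ≤ (max C 0 * d / N) ^ 2 :=
        pow_le_pow_left₀ (norm_nonneg _) hC' 2
      calc ‖h ξ‖ ^ 2 ≤ (max C 0 * d / N) ^ 2 := h1
        _ = (max C 0) ^ 2 * d ^ 2 / N ^ 2 := by ring
    have hrpow : N ^ (-(2 * s)) ≤ a ^ (-(2 * s)) :=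
      Real.rpow_le_rpow_of_nonpos ha0 haN (by linarith)
    have hsplit : a ^ (-(2 + 2 * s)) = (a ^ 2)⁻¹ * a ^ (-(2 * s)) := by
      rw [show -(2 + 2 * s) = (-2) + (-(2 * s)) by ring, Real.rpow_add ha0]
      congr 1
      rw [show (-2 : ℝ) = -(2:ℕ) by norm_num, Real.rpow_neg ha0.le, Real.rpow_natCast]
    calc ‖h ξ‖ ^ 2 * N ^ (-(2 * s))
        ≤ ((max C 0) ^ 2 * d ^ 2 / N ^ 2) * N ^ (-(2 * s)) := by
          apply mul_le_mul_of_nonneg_right hsq (Real.rpow_nonneg hN0.le _)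
      _ ≤ ((max C 0) ^ 2 * L ^ 2 / a ^ 2) * a ^ (-(2 * s)) := by
          apply mul_le_mul ?_ hrpow (Real.rpow_nonneg hN0.le _) (by positivity)
          gcongr <;> first | exact hd0 | exact hdL | exact haN | positivity | linarith
      _ = D * L ^ 2 * a ^ (-(2 + 2 * s)) := by
          rw [hsplit, hDdef]
          ring
  -- assemble
  calc ∫⁻ ξ in Ω, ENNReal.ofReal (‖h ξ‖ ^ 2 * ‖ξ‖ ^ (-(2 * s))) ∂volume
      ≤ ∫⁻ ξ in Ω, G (F ξ) ∂volume :=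
        setLIntegral_mono (hGmeas.comp F.measurable) hpt
    _ ≤ ∫⁻ ξ, G (F ξ) ∂volume := setLIntegral_le_lintegral _ _
    _ = ∫⁻ p, G p ∂volume := hFmp.lintegral_comp_emb F.measurableEmbedding G
    _ < ⊤ := aux_prod (n - 2) hs hD
end
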